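/- arXiv:1403.7732 — 4 statements merged into one kernel-verified Lean document; each statement's English description precedes it below -/
import Mathlib

section
/- Let X₁, X₂ be complex Banach spaces, X := X₁ × X₂, and let 𝒜 = (A_{jk}), ℬ = (B_{jk}) be block operator matrices on X, inducing operators 𝒜, ℬ on X. Let 𝒜ℬ denote the composition of the induced operators, with domain {x ∈ D(ℬ) : ℬx ∈ D(𝒜)}, and let 𝒜×ℬ denote the operator induced by the formal product block operator matrix. Then 𝒜×ℬ = 𝒜ℬ (equality of operators, including domains) if and only if 𝒜ℬ has a matrix representation. -/
open LinearPMap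
open scoped LinearPMap

namespace BlockOp

variable {E F G X₁ X₂ Y₁ Y₂ : Type*}
  [AddCommGroup E] [Module ℂ E] [AddCommGroup F] [Module ℂ F] [AddCommGroup G] [Module ℂ G]
  [AddCommGroup X₁] [Module ℂ X₁] [AddCommGroup X₂] [Module ℂ X₂]
  [AddCommGroup Y₁] [Module ℂ Y₁] [AddCommGroup Y₂] [Module ℂ Y₂]

/-- The operator on `X₁ × X₂` induced by a block operator matrix `[[A, B], [C, D]]`. -/
noncomputable def blockOp (A : X₁ →ₗ.[ℂ] Y₁) (B : X₂ →ₗ.[ℂ] Y₁)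
    (C : X₁ →ₗ.[ℂ] Y₂) (D : X₂ →ₗ.[ℂ] Y₂) : (X₁ × X₂) →ₗ.[ℂ] (Y₁ × Y₂) where
  domain := (A.domain ⊓ C.domain).prod (B.domain ⊓ D.domain)
  toFun := LinearMap.prod
    (A.toFun ∘ₗ Submodule.inclusion inf_le_left ∘ₗ
        (LinearMap.fst ℂ X₁ X₂).restrict
          (p := (A.domain ⊓ C.domain).prod (B.domain ⊓ D.domain))
          (q := A.domain ⊓ C.domain) (fun _ hx => hx.1)
      + B.toFun ∘ₗ Submodule.inclusion inf_le_left ∘ₗ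
        (LinearMap.snd ℂ X₁ X₂).restrict
          (p := (A.domain ⊓ C.domain).prod (B.domain ⊓ D.domain))
          (q := B.domain ⊓ D.domain) (fun _ hx => hx.2))
    (C.toFun ∘ₗ Submodule.inclusion inf_le_right ∘ₗ
        (LinearMap.fst ℂ X₁ X₂).restrict
          (p := (A.domain ⊓ C.domain).prod (B.domain ⊓ D.domain))
          (q := A.domain ⊓ C.domain) (fun _ hx => hx.1)
      + D.toFun ∘ₗ Submodule.inclusion inf_le_right ∘ₗ
        (LinearMap.snd ℂ X₁ X₂).restrict
          (p := (A.domain ⊓ C.domain).prod (B.domain ⊓ D.domain))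
          (q := B.domain ⊓ D.domain) (fun _ hx => hx.2))

/-- A linear operator on a product space has a matrix representation if it is induced
by some block operator matrix. -/
def HasMatrixRep (T : (X₁ × X₂) →ₗ.[ℂ] (Y₁ × Y₂)) : Prop :=
  ∃ (A : X₁ →ₗ.[ℂ] Y₁) (B : X₂ →ₗ.[ℂ] Y₁) (C : X₁ →ₗ.[ℂ] Y₂) (D : X₂ →ₗ.[ℂ] Y₂),
    T = blockOp A B C D

/-- The composition of two partially defined operators, with its natural domain
`{x ∈ D(B) : B x ∈ D(A)}`. -/
noncomputable def pcomp (A : F →ₗ.[ℂ] G) (B : E →ₗ.[ℂ] F) : E →ₗ.[ℂ] G where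
  domain :=
    { carrier := {x | ∃ hx : x ∈ B.domain, B ⟨x, hx⟩ ∈ A.domain}
      zero_mem' := ⟨B.domain.zero_mem, by
        have : (⟨0, B.domain.zero_mem⟩ : B.domain) = 0 := rfl
        rw [this, LinearPMap.map_zero]; exact A.domain.zero_mem⟩
      add_mem' := by
        rintro a b ⟨ha, ha'⟩ ⟨hb, hb'⟩
        refine ⟨add_mem ha hb, ?_⟩
        have : (⟨a + b, add_mem ha hb⟩ : B.domain) = ⟨a, ha⟩ + ⟨b, hb⟩ := rfl
        rw [this, LinearPMap.map_add]
        exact add_mem ha' hb'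
      smul_mem' := by
        rintro c a ⟨ha, ha'⟩
        refine ⟨Submodule.smul_mem _ c ha, ?_⟩
        have : (⟨c • a, Submodule.smul_mem _ c ha⟩ : B.domain) = c • (⟨a, ha⟩ : B.domain) := rfl
        rw [this, LinearPMap.map_smul]
        exact Submodule.smul_mem _ c ha' }
  toFun := A.toFun ∘ₗ LinearMap.codRestrict A.domain
      (B.toFun ∘ₗ
        { toFun := fun x => (⟨(x : E), x.2.choose⟩ : B.domain)
          map_add' := fun x y => Subtype.ext rfl
          map_smul' := fun c x => Subtype.ext rfl })
      (fun x => x.2.choose_spec)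

end BlockOp

namespace BlockOp

section Transport

variable {E F G E' F' : Type*}
  [AddCommGroup E] [Module ℂ E] [AddCommGroup F] [Module ℂ F] [AddCommGroup G] [Module ℂ G]
  [AddCommGroup E'] [Module ℂ E'] [AddCommGroup F'] [Module ℂ F']

/-- Transport a partially defined linear map along linear equivalences. -/
noncomputable def pmapCongr (e : E ≃ₗ[ℂ] E') (T : E' →ₗ.[ℂ] F') (e' : F' ≃ₗ[ℂ] F) :
    E →ₗ.[ℂ] F where
  domain := T.domain.comap (e : E →ₗ[ℂ] E')
  toFun := (e' : F' →ₗ[ℂ] F) ∘ₗ T.toFun ∘ₗ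
    ((e : E →ₗ[ℂ] E').restrict (p := T.domain.comap (e : E →ₗ[ℂ] E')) (q := T.domain)
      (fun _ hx => hx))

end Transport

section Corners

variable {X₁ X₂ Y₁ Y₂ : Type*}
  [AddCommGroup X₁] [Module ℂ X₁] [AddCommGroup X₂] [Module ℂ X₂]
  [AddCommGroup Y₁] [Module ℂ Y₁] [AddCommGroup Y₂] [Module ℂ Y₂]

/-- The upper-left corner `P₁ 𝒜 J₁` of an operator on a product space, with domain
`{x₁ : (x₁, 0) ∈ D(𝒜)}`. -/
noncomputable def corner₁₁ (T : (X₁ × X₂) →ₗ.[ℂ] (Y₁ × Y₂)) : X₁ →ₗ.[ℂ] Y₁ where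
  domain := T.domain.comap (LinearMap.inl ℂ X₁ X₂)
  toFun := LinearMap.fst ℂ Y₁ Y₂ ∘ₗ T.toFun ∘ₗ
    ((LinearMap.inl ℂ X₁ X₂).restrict (p := T.domain.comap (LinearMap.inl ℂ X₁ X₂))
      (q := T.domain) (fun _ hx => hx))

/-- The lower-left corner `P₂ 𝒜 J₁`. -/
noncomputable def corner₂₁ (T : (X₁ × X₂) →ₗ.[ℂ] (Y₁ × Y₂)) : X₁ →ₗ.[ℂ] Y₂ where
  domain := T.domain.comap (LinearMap.inl ℂ X₁ X₂)
  toFun := LinearMap.snd ℂ Y₁ Y₂ ∘ₗ T.toFun ∘ₗ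
    ((LinearMap.inl ℂ X₁ X₂).restrict (p := T.domain.comap (LinearMap.inl ℂ X₁ X₂))
      (q := T.domain) (fun _ hx => hx))

/-- The upper-right corner `P₁ 𝒜 J₂`. -/
noncomputable def corner₁₂ (T : (X₁ × X₂) →ₗ.[ℂ] (Y₁ × Y₂)) : X₂ →ₗ.[ℂ] Y₁ where
  domain := T.domain.comap (LinearMap.inr ℂ X₁ X₂)
  toFun := LinearMap.fst ℂ Y₁ Y₂ ∘ₗ T.toFun ∘ₗ
    ((LinearMap.inr ℂ X₁ X₂).restrict (p := T.domain.comap (LinearMap.inr ℂ X₁ X₂))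
      (q := T.domain) (fun _ hx => hx))

/-- The lower-right corner `P₂ 𝒜 J₂`. -/
noncomputable def corner₂₂ (T : (X₁ × X₂) →ₗ.[ℂ] (Y₁ × Y₂)) : X₂ →ₗ.[ℂ] Y₂ where
  domain := T.domain.comap (LinearMap.inr ℂ X₁ X₂)
  toFun := LinearMap.snd ℂ Y₁ Y₂ ∘ₗ T.toFun ∘ₗ
    ((LinearMap.inr ℂ X₁ X₂).restrict (p := T.domain.comap (LinearMap.inr ℂ X₁ X₂))
      (q := T.domain) (fun _ hx => hx))

end Corners

section Shift

variable {E : Type*} [AddCommGroup E] [Module ℂ E]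

/-- `T - λ`, i.e. `T - λ·I`, with domain `D(T)`. -/
noncomputable def shift (T : E →ₗ.[ℂ] E) (lam : ℂ) : E →ₗ.[ℂ] E :=
  T - (lam • (LinearMap.id : E →ₗ[ℂ] E)).toPMap ⊤

/-- The identity as a partially defined operator with full domain. -/
noncomputable def idP (E : Type*) [AddCommGroup E] [Module ℂ E] : E →ₗ.[ℂ] E :=
  (LinearMap.id : E →ₗ[ℂ] E).toPMap ⊤

end Shift

section Resolvent

variable {E : Type*} [NormedAddCommGroup E] [NormedSpace ℂ E]

/-- `R` is the (bounded, everywhere defined) inverse of `T - λ`;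
this witnesses that `λ` belongs to the resolvent set of `T`. -/
structure IsResolventAt (T : E →ₗ.[ℂ] E) (lam : ℂ) (R : E →L[ℂ] E) : Prop where
  mem : ∀ y, R y ∈ T.domain
  right_inv : ∀ y, T ⟨R y, mem y⟩ - lam • (R y) = y
  left_inv : ∀ x : T.domain, R (T x - lam • (x : E)) = x

/-- The resolvent set of `T`: those `λ ∈ ℂ` for which `T - λ` is a bijection from `D(T)`
onto the whole space with bounded inverse. -/
def resolventSet (T : E →ₗ.[ℂ] E) : Set ℂ :=
  {lam | ∃ R : E →L[ℂ] E, IsResolventAt T lam R}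

end Resolvent

section RelativeBound

variable {E F G : Type*} [NormedAddCommGroup E] [NormedSpace ℂ E]
  [NormedAddCommGroup F] [NormedSpace ℂ F] [NormedAddCommGroup G] [NormedSpace ℂ G]

/-- `S` is `T`-bounded with constants `a`, `b`:
`D(T) ⊆ D(S)` and `‖S x‖ ≤ a ‖x‖ + b ‖T x‖` on `D(T)`. -/
structure RelBound (S : E →ₗ.[ℂ] G) (T : E →ₗ.[ℂ] F) (a b : ℝ) : Prop where
  dom_le : T.domain ≤ S.domain
  bound : ∀ x : T.domain, ‖S ⟨(x : E), dom_le x.2⟩‖ ≤ a * ‖(x : E)‖ + b * ‖T x‖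

/-- `S` is `T`-bounded with relative bound `< c`. -/
def IsRelBoundedLt (S : E →ₗ.[ℂ] G) (T : E →ₗ.[ℂ] F) (c : ℝ) : Prop :=
  ∃ b, 0 ≤ b ∧ b < c ∧ ∃ a, 0 ≤ a ∧ RelBound S T a b

/-- `S` is `T`-bounded with relative bound `≤ c` (for `c = 0`: relative bound `0`). -/
def IsRelBoundedLe (S : E →ₗ.[ℂ] G) (T : E →ₗ.[ℂ] F) (c : ℝ) : Prop :=
  ∀ b, c < b → ∃ a, 0 ≤ a ∧ RelBound S T a b

end RelativeBound

section HilbertProduct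

variable {H₁ H₂ K₁ K₂ : Type*}
  [NormedAddCommGroup H₁] [InnerProductSpace ℂ H₁]
  [NormedAddCommGroup H₂] [InnerProductSpace ℂ H₂]
  [NormedAddCommGroup K₁] [InnerProductSpace ℂ K₁]
  [NormedAddCommGroup K₂] [InnerProductSpace ℂ K₂]

/-- The operator induced by a block operator matrix on the Hilbert space
`H₁ ×_{ℓ²} H₂`, i.e. `WithLp 2 (H₁ × H₂)`. -/
noncomputable def blockOpL (A : H₁ →ₗ.[ℂ] K₁) (B : H₂ →ₗ.[ℂ] K₁)
    (C : H₁ →ₗ.[ℂ] K₂) (D : H₂ →ₗ.[ℂ] K₂) :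
    WithLp 2 (H₁ × H₂) →ₗ.[ℂ] WithLp 2 (K₁ × K₂) :=
  pmapCongr (WithLp.linearEquiv 2 ℂ (H₁ × H₂)) (blockOp A B C D)
    (WithLp.linearEquiv 2 ℂ (K₁ × K₂)).symm

/-- A linear operator on `H₁ ×_{ℓ²} H₂` has a matrix representation if it is induced by
some block operator matrix. -/
def HasMatrixRepL (T : WithLp 2 (H₁ × H₂) →ₗ.[ℂ] WithLp 2 (K₁ × K₂)) : Prop :=
  ∃ (A : H₁ →ₗ.[ℂ] K₁) (B : H₂ →ₗ.[ℂ] K₁) (C : H₁ →ₗ.[ℂ] K₂) (D : H₂ →ₗ.[ℂ] K₂),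
    T = blockOpL A B C D

end HilbertProduct

section EssSelfAdjoint

variable {E : Type*} [NormedAddCommGroup E] [InnerProductSpace ℂ E] [CompleteSpace E]

/-- An operator is essentially self-adjoint if it is closable and its closure is
self-adjoint. -/
def IsEssentiallySelfAdjoint (T : E →ₗ.[ℂ] E) : Prop :=
  T.IsClosable ∧ IsSelfAdjoint T.closure

end EssSelfAdjoint

end BlockOp

namespace BlockOp

section Helpers

variable {E F G X₁ X₂ Y₁ Y₂ : Type*}
  [AddCommGroup E] [Module ℂ E] [AddCommGroup F] [Module ℂ F] [AddCommGroup G] [Module ℂ G]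
  [AddCommGroup X₁] [Module ℂ X₁] [AddCommGroup X₂] [Module ℂ X₂]
  [AddCommGroup Y₁] [Module ℂ Y₁] [AddCommGroup Y₂] [Module ℂ Y₂]

lemma mem_blockOp_domain {A : X₁ →ₗ.[ℂ] Y₁} {B : X₂ →ₗ.[ℂ] Y₁} {C : X₁ →ₗ.[ℂ] Y₂}
    {D : X₂ →ₗ.[ℂ] Y₂} {x : X₁ × X₂} :
    x ∈ (blockOp A B C D).domain ↔
      (x.1 ∈ A.domain ∧ x.1 ∈ C.domain) ∧ (x.2 ∈ B.domain ∧ x.2 ∈ D.domain) :=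
  Iff.rfl

lemma blockOp_apply {A : X₁ →ₗ.[ℂ] Y₁} {B : X₂ →ₗ.[ℂ] Y₁} {C : X₁ →ₗ.[ℂ] Y₂}
    {D : X₂ →ₗ.[ℂ] Y₂} (x : X₁ × X₂) (h : x ∈ (blockOp A B C D).domain)
    (hA : x.1 ∈ A.domain) (hB : x.2 ∈ B.domain) (hC : x.1 ∈ C.domain) (hD : x.2 ∈ D.domain) :
    blockOp A B C D ⟨x, h⟩ =
      (A ⟨x.1, hA⟩ + B ⟨x.2, hB⟩, C ⟨x.1, hC⟩ + D ⟨x.2, hD⟩) := rfl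

lemma mem_pcomp_domain {A : F →ₗ.[ℂ] G} {B : E →ₗ.[ℂ] F} {x : E} :
    x ∈ (pcomp A B).domain ↔ ∃ hx : x ∈ B.domain, B ⟨x, hx⟩ ∈ A.domain :=
  Iff.rfl

lemma pcomp_apply {A : F →ₗ.[ℂ] G} {B : E →ₗ.[ℂ] F} (x : E) (h : x ∈ (pcomp A B).domain)
    (hx : x ∈ B.domain) (hx' : B ⟨x, hx⟩ ∈ A.domain) :
    pcomp A B ⟨x, h⟩ = A ⟨B ⟨x, hx⟩, hx'⟩ := rfl

lemma subtype_mk_zero {p : Submodule ℂ E} (h : (0 : E) ∈ p) : (⟨0, h⟩ : p) = 0 := rfl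

end Helpers

section MainHelpers

variable {X₁ X₂ : Type*}
  [AddCommGroup X₁] [Module ℂ X₁] [AddCommGroup X₂] [Module ℂ X₂]

/-- The operator induced by the formal product is always a restriction of the composition. -/
lemma formal_le (A₁₁ : X₁ →ₗ.[ℂ] X₁) (A₁₂ : X₂ →ₗ.[ℂ] X₁) (A₂₁ : X₁ →ₗ.[ℂ] X₂)
    (A₂₂ : X₂ →ₗ.[ℂ] X₂) (B₁₁ : X₁ →ₗ.[ℂ] X₁) (B₁₂ : X₂ →ₗ.[ℂ] X₁) (B₂₁ : X₁ →ₗ.[ℂ] X₂)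
    (B₂₂ : X₂ →ₗ.[ℂ] X₂) :
    blockOp (pcomp A₁₁ B₁₁ + pcomp A₁₂ B₂₁) (pcomp A₁₁ B₁₂ + pcomp A₁₂ B₂₂)
        (pcomp A₂₁ B₁₁ + pcomp A₂₂ B₂₁) (pcomp A₂₁ B₁₂ + pcomp A₂₂ B₂₂) ≤
      pcomp (blockOp A₁₁ A₁₂ A₂₁ A₂₂) (blockOp B₁₁ B₁₂ B₂₁ B₂₂) := by
  have hdom : ∀ x : X₁ × X₂,
      x ∈ (blockOp (pcomp A₁₁ B₁₁ + pcomp A₁₂ B₂₁) (pcomp A₁₁ B₁₂ + pcomp A₁₂ B₂₂)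
        (pcomp A₂₁ B₁₁ + pcomp A₂₂ B₂₁) (pcomp A₂₁ B₁₂ + pcomp A₂₂ B₂₂)).domain →
      x ∈ (pcomp (blockOp A₁₁ A₁₂ A₂₁ A₂₂) (blockOp B₁₁ B₁₂ B₂₁ B₂₂)).domain := by
    rintro x ⟨⟨⟨⟨hb11, ha11⟩, ⟨hb21, ha12⟩⟩, ⟨⟨hb11', ha21⟩, ⟨hb21', ha22⟩⟩⟩,
      ⟨⟨⟨hb12, ha11'⟩, ⟨hb22, ha12'⟩⟩, ⟨⟨hb12', ha21'⟩, ⟨hb22', ha22'⟩⟩⟩⟩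
    exact ⟨⟨⟨hb11, hb21⟩, ⟨hb12, hb22⟩⟩,
      ⟨⟨add_mem ha11 ha11', add_mem ha21 ha21'⟩, ⟨add_mem ha12 ha12', add_mem ha22 ha22'⟩⟩⟩
  refine ⟨hdom, ?_⟩
  rintro ⟨x, hx⟩ ⟨y, hy⟩ hxy
  simp only at hxy
  subst hxy
  obtain ⟨⟨⟨⟨hb11, ha11⟩, ⟨hb21, ha12⟩⟩, ⟨⟨hb11', ha21⟩, ⟨hb21', ha22⟩⟩⟩,
      ⟨⟨⟨hb12, ha11'⟩, ⟨hb22, ha12'⟩⟩, ⟨⟨hb12', ha21'⟩, ⟨hb22', ha22'⟩⟩⟩⟩ := id hx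
  have hB : x ∈ (blockOp B₁₁ B₁₂ B₂₁ B₂₂).domain := ⟨⟨hb11, hb21⟩, ⟨hb12, hb22⟩⟩
  have hA : blockOp B₁₁ B₁₂ B₂₁ B₂₂ ⟨x, hB⟩ ∈ (blockOp A₁₁ A₁₂ A₂₁ A₂₂).domain :=
    ⟨⟨add_mem ha11 ha11', add_mem ha21 ha21'⟩, ⟨add_mem ha12 ha12', add_mem ha22 ha22'⟩⟩
  have hrhs : pcomp (blockOp A₁₁ A₁₂ A₂₁ A₂₂) (blockOp B₁₁ B₁₂ B₂₁ B₂₂) ⟨x, hy⟩ =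
      blockOp A₁₁ A₁₂ A₂₁ A₂₂ ⟨blockOp B₁₁ B₁₂ B₂₁ B₂₂ ⟨x, hB⟩, hA⟩ := rfl
  have hlhs : blockOp (pcomp A₁₁ B₁₁ + pcomp A₁₂ B₂₁) (pcomp A₁₁ B₁₂ + pcomp A₁₂ B₂₂)
      (pcomp A₂₁ B₁₁ + pcomp A₂₂ B₂₁) (pcomp A₂₁ B₁₂ + pcomp A₂₂ B₂₂) ⟨x, hx⟩ =
      ((A₁₁ ⟨B₁₁ ⟨x.1, hb11⟩, ha11⟩ + A₁₂ ⟨B₂₁ ⟨x.1, hb21⟩, ha12⟩) +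
        (A₁₁ ⟨B₁₂ ⟨x.2, hb12⟩, ha11'⟩ + A₁₂ ⟨B₂₂ ⟨x.2, hb22⟩, ha12'⟩),
       (A₂₁ ⟨B₁₁ ⟨x.1, hb11'⟩, ha21⟩ + A₂₂ ⟨B₂₁ ⟨x.1, hb21'⟩, ha22⟩) +
        (A₂₁ ⟨B₁₂ ⟨x.2, hb12'⟩, ha21'⟩ + A₂₂ ⟨B₂₂ ⟨x.2, hb22'⟩, ha22'⟩)) := rfl
  rw [hlhs, hrhs]
  rw [blockOp_apply _ hA (add_mem ha11 ha11') (add_mem ha12 ha12')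
    (add_mem ha21 ha21') (add_mem ha22 ha22')]
  have e1 : (⟨(blockOp B₁₁ B₁₂ B₂₁ B₂₂ ⟨x, hB⟩).1, add_mem ha11 ha11'⟩ : A₁₁.domain) =
      ⟨B₁₁ ⟨x.1, hb11⟩, ha11⟩ + ⟨B₁₂ ⟨x.2, hb12⟩, ha11'⟩ := rfl
  have e2 : (⟨(blockOp B₁₁ B₁₂ B₂₁ B₂₂ ⟨x, hB⟩).2, add_mem ha12 ha12'⟩ : A₁₂.domain) =
      ⟨B₂₁ ⟨x.1, hb21⟩, ha12⟩ + ⟨B₂₂ ⟨x.2, hb22⟩, ha12'⟩ := rfl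
  have e3 : (⟨(blockOp B₁₁ B₁₂ B₂₁ B₂₂ ⟨x, hB⟩).1, add_mem ha21 ha21'⟩ : A₂₁.domain) =
      ⟨B₁₁ ⟨x.1, hb11'⟩, ha21⟩ + ⟨B₁₂ ⟨x.2, hb12'⟩, ha21'⟩ := rfl
  have e4 : (⟨(blockOp B₁₁ B₁₂ B₂₁ B₂₂ ⟨x, hB⟩).2, add_mem ha22 ha22'⟩ : A₂₂.domain) =
      ⟨B₂₁ ⟨x.1, hb21'⟩, ha22⟩ + ⟨B₂₂ ⟨x.2, hb22'⟩, ha22'⟩ := rfl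
  rw [e1, e2, e3, e4, LinearPMap.map_add, LinearPMap.map_add, LinearPMap.map_add,
    LinearPMap.map_add]
  exact Prod.ext (by abel) (by abel)

end MainHelpers

end BlockOp

namespace BlockOp

theorem statement1 {X₁ X₂ : Type*}
    [NormedAddCommGroup X₁] [NormedSpace ℂ X₁] [CompleteSpace X₁]
    [NormedAddCommGroup X₂] [NormedSpace ℂ X₂] [CompleteSpace X₂]
    (A₁₁ : X₁ →ₗ.[ℂ] X₁) (A₁₂ : X₂ →ₗ.[ℂ] X₁) (A₂₁ : X₁ →ₗ.[ℂ] X₂) (A₂₂ : X₂ →ₗ.[ℂ] X₂)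
    (B₁₁ : X₁ →ₗ.[ℂ] X₁) (B₁₂ : X₂ →ₗ.[ℂ] X₁) (B₂₁ : X₁ →ₗ.[ℂ] X₂) (B₂₂ : X₂ →ₗ.[ℂ] X₂) :
    blockOp (pcomp A₁₁ B₁₁ + pcomp A₁₂ B₂₁) (pcomp A₁₁ B₁₂ + pcomp A₁₂ B₂₂)
        (pcomp A₂₁ B₁₁ + pcomp A₂₂ B₂₁) (pcomp A₂₁ B₁₂ + pcomp A₂₂ B₂₂) =
      pcomp (blockOp A₁₁ A₁₂ A₂₁ A₂₂) (blockOp B₁₁ B₁₂ B₂₁ B₂₂) ↔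
    HasMatrixRep (pcomp (blockOp A₁₁ A₁₂ A₂₁ A₂₂) (blockOp B₁₁ B₁₂ B₂₁ B₂₂)) := by
  constructor
  · intro h
    exact ⟨_, _, _, _, h.symm⟩
  · rintro ⟨A, B, C, D, hT⟩
    refine le_antisymm (formal_le _ _ _ _ _ _ _ _) ?_
    have h1 := formal_le A₁₁ A₁₂ A₂₁ A₂₂ B₁₁ B₁₂ B₂₁ B₂₂
    have hdomle : (pcomp (blockOp A₁₁ A₁₂ A₂₁ A₂₂) (blockOp B₁₁ B₁₂ B₂₁ B₂₂)).domain ≤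
        (blockOp (pcomp A₁₁ B₁₁ + pcomp A₁₂ B₂₁) (pcomp A₁₁ B₁₂ + pcomp A₁₂ B₂₂)
          (pcomp A₂₁ B₁₁ + pcomp A₂₂ B₂₁) (pcomp A₂₁ B₁₂ + pcomp A₂₂ B₂₂)).domain := by
      intro x hx
      -- the domain of the composition is a product, by the matrix representation
      have hprod : (pcomp (blockOp A₁₁ A₁₂ A₂₁ A₂₂) (blockOp B₁₁ B₁₂ B₂₁ B₂₂)).domain =
          (A.domain ⊓ C.domain).prod (B.domain ⊓ D.domain) := by rw [hT]; rfl
      have hx' : x ∈ (A.domain ⊓ C.domain).prod (B.domain ⊓ D.domain) := hprod ▸ hx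
      have h1mem : ((x.1, 0) : X₁ × X₂) ∈
          (pcomp (blockOp A₁₁ A₁₂ A₂₁ A₂₂) (blockOp B₁₁ B₁₂ B₂₁ B₂₂)).domain := by
        rw [hprod]
        exact ⟨hx'.1, Submodule.zero_mem _⟩
      have h2mem : ((0, x.2) : X₁ × X₂) ∈
          (pcomp (blockOp A₁₁ A₁₂ A₂₁ A₂₂) (blockOp B₁₁ B₁₂ B₂₁ B₂₂)).domain := by
        rw [hprod]
        exact ⟨Submodule.zero_mem _, hx'.2⟩
      obtain ⟨hB1, hA1⟩ := h1mem
      obtain ⟨hB2, hA2⟩ := h2mem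
      -- unpack memberships for the first column
      obtain ⟨⟨hb11, hb21⟩, hz1⟩ := hB1
      obtain ⟨hz2, ⟨hb12, hb22⟩⟩ := hB2
      have ev1 : blockOp B₁₁ B₁₂ B₂₁ B₂₂ ⟨((x.1, 0) : X₁ × X₂), ⟨⟨hb11, hb21⟩, hz1⟩⟩ =
          (B₁₁ ⟨x.1, hb11⟩, B₂₁ ⟨x.1, hb21⟩) := by
        refine (blockOp_apply _ _ hb11 hz1.1 hb21 hz1.2).trans ?_
        rw [subtype_mk_zero (E := X₂) hz1.1, subtype_mk_zero (E := X₂) hz1.2,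
          LinearPMap.map_zero, LinearPMap.map_zero, add_zero, add_zero]
      have ev2 : blockOp B₁₁ B₁₂ B₂₁ B₂₂ ⟨((0, x.2) : X₁ × X₂), ⟨hz2, ⟨hb12, hb22⟩⟩⟩ =
          (B₁₂ ⟨x.2, hb12⟩, B₂₂ ⟨x.2, hb22⟩) := by
        refine (blockOp_apply _ _ hz2.1 hb12 hz2.2 hb22).trans ?_
        rw [subtype_mk_zero (E := X₁) hz2.1, subtype_mk_zero (E := X₁) hz2.2,
          LinearPMap.map_zero, LinearPMap.map_zero, zero_add, zero_add]
      rw [ev1] at hA1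
      rw [ev2] at hA2
      exact ⟨⟨⟨⟨hb11, hA1.1.1⟩, ⟨hb21, hA1.2.1⟩⟩, ⟨⟨hb11, hA1.1.2⟩, ⟨hb21, hA1.2.2⟩⟩⟩,
        ⟨⟨⟨hb12, hA2.1.1⟩, ⟨hb22, hA2.2.1⟩⟩, ⟨⟨hb12, hA2.1.2⟩, ⟨hb22, hA2.2.2⟩⟩⟩⟩
    refine ⟨hdomle, ?_⟩
    intro x y hxy
    have hx' : x = ⟨(y : X₁ × X₂), h1.1 y.2⟩ := Subtype.ext hxy
    rw [hx']
    exact (h1.2 (x := y) (y := ⟨(y : X₁ × X₂), h1.1 y.2⟩) rfl).symm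

end BlockOp
end

section
/- Let H₁, H₂ be complex Hilbert spaces, H := H₁ × H₂, and let 𝒜 = [[A, B],[C, D]] be a block operator matrix on H such that D(A) = D(C) =: D₁ is dense in H₁ and D(B) = D(D) =: D₂ is dense in H₂ (so D(𝒜) = D₁ × D₂ is dense in H). Let 𝒜^× denote the formal adjoint block operator matrix, i.e., the operator induced by [[A*, C*],[B*, D*]], with domain (D(A*) ∩ D(B*)) × (D(C*) ∩ D(D*)). Then 𝒜^× = 𝒜* (equality of operators, including domains) if and only if 𝒜* has a matrix representation, i.e., D(𝒜*) = P₁D(𝒜*) × P₂D(𝒜*) for the coordinate projections P₁, P₂. -/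
open LinearPMap
open scoped LinearPMap

namespace BlockOp

section Helpers
variable {H₁ H₂ : Type*}
  [NormedAddCommGroup H₁] [InnerProductSpace ℂ H₁] [CompleteSpace H₁]
  [NormedAddCommGroup H₂] [InnerProductSpace ℂ H₂] [CompleteSpace H₂]
  {A : H₁ →ₗ.[ℂ] H₁} {B : H₂ →ₗ.[ℂ] H₁} {C : H₁ →ₗ.[ℂ] H₂} {D : H₂ →ₗ.[ℂ] H₂}

omit [CompleteSpace H₁] [CompleteSpace H₂] in
lemma mem_blockOpL_domain {K₁ K₂ : Type*}
    [NormedAddCommGroup K₁] [InnerProductSpace ℂ K₁]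
    [NormedAddCommGroup K₂] [InnerProductSpace ℂ K₂]
    {A : H₁ →ₗ.[ℂ] K₁} {B : H₂ →ₗ.[ℂ] K₁} {C : H₁ →ₗ.[ℂ] K₂} {D : H₂ →ₗ.[ℂ] K₂}
    {x : WithLp 2 (H₁ × H₂)} :
    x ∈ (blockOpL A B C D).domain ↔
      (x.fst ∈ A.domain ∧ x.fst ∈ C.domain) ∧ (x.snd ∈ B.domain ∧ x.snd ∈ D.domain) := Iff.rfl

omit [CompleteSpace H₁] [CompleteSpace H₂] in
lemma blockOpL_apply {K₁ K₂ : Type*}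
    [NormedAddCommGroup K₁] [InnerProductSpace ℂ K₁]
    [NormedAddCommGroup K₂] [InnerProductSpace ℂ K₂]
    {A : H₁ →ₗ.[ℂ] K₁} {B : H₂ →ₗ.[ℂ] K₁} {C : H₁ →ₗ.[ℂ] K₂} {D : H₂ →ₗ.[ℂ] K₂}
    {x : WithLp 2 (H₁ × H₂)} (hx : x ∈ (blockOpL A B C D).domain) :
    blockOpL A B C D ⟨x, hx⟩ =
      (WithLp.equiv 2 (K₁ × K₂)).symm
        (A ⟨x.fst, hx.1.1⟩ + B ⟨x.snd, hx.2.1⟩, C ⟨x.fst, hx.1.2⟩ + D ⟨x.snd, hx.2.2⟩) := rfl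

omit [CompleteSpace H₁] [CompleteSpace H₂] in
lemma dense_blockOpL_domain (hAC : A.domain = C.domain) (hBD : B.domain = D.domain)
    (h1 : Dense (A.domain : Set H₁)) (h2 : Dense (B.domain : Set H₂)) :
    Dense ((blockOpL A B C D).domain : Set (WithLp 2 (H₁ × H₂))) := by
  have hd : Dense ((A.domain : Set H₁) ×ˢ (B.domain : Set H₂)) := h1.prod h2
  have himg := ((WithLp.prodContinuousLinearEquiv 2 ℂ H₁ H₂).symm.toHomeomorph).isDenseEmbedding.dense_image.mpr hd
  have hset : ⇑((WithLp.prodContinuousLinearEquiv 2 ℂ H₁ H₂).symm.toHomeomorph) '' ((A.domain : Set H₁) ×ˢ (B.domain : Set H₂)) =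
      ((blockOpL A B C D).domain : Set (WithLp 2 (H₁ × H₂))) := by
    ext x
    constructor
    · rintro ⟨a, ⟨ha1, ha2⟩, rfl⟩
      exact mem_blockOpL_domain.mpr ⟨⟨ha1, hAC ▸ ha1⟩, ⟨ha2, hBD ▸ ha2⟩⟩
    · intro hx
      exact ⟨WithLp.equiv 2 _ x, ⟨(mem_blockOpL_domain.mp hx).1.1,
        (mem_blockOpL_domain.mp hx).2.1⟩, rfl⟩
  exact hset ▸ himg

lemma blockOpL_isFormalAdjoint (hAC : A.domain = C.domain) (hBD : B.domain = D.domain)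
    (h1 : Dense (A.domain : Set H₁)) (h2 : Dense (B.domain : Set H₂)) :
    (blockOpL A B C D).IsFormalAdjoint (blockOpL A.adjoint C.adjoint B.adjoint D.adjoint) := by
  intro x y
  obtain ⟨x, hx⟩ := x
  obtain ⟨y, hy⟩ := y
  rw [blockOpL_apply hx, blockOpL_apply hy, WithLp.prod_inner_apply, WithLp.prod_inner_apply]
  simp only [WithLp.equiv_symm_apply]
  have hA := congrArg (starRingEnd ℂ) (A.adjoint_isFormalAdjoint h1 ⟨y.fst, hy.1.1⟩ ⟨x.fst, hx.1.1⟩)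
  have hB := congrArg (starRingEnd ℂ) (B.adjoint_isFormalAdjoint h2 ⟨y.fst, hy.1.2⟩ ⟨x.snd, hx.2.1⟩)
  have hC := congrArg (starRingEnd ℂ)
    ((C.adjoint_isFormalAdjoint (hAC ▸ h1)) ⟨y.snd, hy.2.1⟩ ⟨x.fst, hx.1.2⟩)
  have hD := congrArg (starRingEnd ℂ)
    ((D.adjoint_isFormalAdjoint (hBD ▸ h2)) ⟨y.snd, hy.2.2⟩ ⟨x.snd, hx.2.2⟩)
  simp only [inner_conj_symm] at hA hB hC hD
  simp only [inner_add_left, inner_add_right]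
  erw [hA, hB, hC, hD]
  simp only [WithLp.ofLp_fst, WithLp.ofLp_snd]
  ring

end Helpers

section Main
variable {H₁ H₂ : Type*}
  [NormedAddCommGroup H₁] [InnerProductSpace ℂ H₁] [CompleteSpace H₁]
  [NormedAddCommGroup H₂] [InnerProductSpace ℂ H₂] [CompleteSpace H₂]
  {A : H₁ →ₗ.[ℂ] H₁} {B : H₂ →ₗ.[ℂ] H₁} {C : H₁ →ₗ.[ℂ] H₂} {D : H₂ →ₗ.[ℂ] H₂}

omit [CompleteSpace H₁] [CompleteSpace H₂] in
lemma blockOpL_apply_inl {K₁ K₂ : Type*}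
    [NormedAddCommGroup K₁] [InnerProductSpace ℂ K₁]
    [NormedAddCommGroup K₂] [InnerProductSpace ℂ K₂]
    {A : H₁ →ₗ.[ℂ] K₁} {B : H₂ →ₗ.[ℂ] K₁} {C : H₁ →ₗ.[ℂ] K₂} {D : H₂ →ₗ.[ℂ] K₂}
    {u₁ : H₁} (hm : (WithLp.equiv 2 (H₁ × H₂)).symm (u₁, 0) ∈ (blockOpL A B C D).domain) :
    blockOpL A B C D ⟨(WithLp.equiv 2 (H₁ × H₂)).symm (u₁, 0), hm⟩ =
      (WithLp.equiv 2 (K₁ × K₂)).symm (A ⟨u₁, hm.1.1⟩, C ⟨u₁, hm.1.2⟩) := by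
  rw [blockOpL_apply hm]
  have hB : (⟨((WithLp.equiv 2 (H₁ × H₂)).symm (u₁, 0)).snd, hm.2.1⟩ : B.domain) = 0 :=
    Subtype.ext rfl
  have hD : (⟨((WithLp.equiv 2 (H₁ × H₂)).symm (u₁, 0)).snd, hm.2.2⟩ : D.domain) = 0 :=
    Subtype.ext rfl
  rw [hB, hD, LinearPMap.map_zero, LinearPMap.map_zero, add_zero, add_zero]
  rfl

omit [CompleteSpace H₁] [CompleteSpace H₂] in
lemma blockOpL_apply_inr {K₁ K₂ : Type*}
    [NormedAddCommGroup K₁] [InnerProductSpace ℂ K₁]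
    [NormedAddCommGroup K₂] [InnerProductSpace ℂ K₂]
    {A : H₁ →ₗ.[ℂ] K₁} {B : H₂ →ₗ.[ℂ] K₁} {C : H₁ →ₗ.[ℂ] K₂} {D : H₂ →ₗ.[ℂ] K₂}
    {u₂ : H₂} (hm : (WithLp.equiv 2 (H₁ × H₂)).symm (0, u₂) ∈ (blockOpL A B C D).domain) :
    blockOpL A B C D ⟨(WithLp.equiv 2 (H₁ × H₂)).symm (0, u₂), hm⟩ =
      (WithLp.equiv 2 (K₁ × K₂)).symm (B ⟨u₂, hm.2.1⟩, D ⟨u₂, hm.2.2⟩) := by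
  rw [blockOpL_apply hm]
  have hA : (⟨((WithLp.equiv 2 (H₁ × H₂)).symm (0, u₂)).fst, hm.1.1⟩ : A.domain) = 0 :=
    Subtype.ext rfl
  have hC : (⟨((WithLp.equiv 2 (H₁ × H₂)).symm (0, u₂)).fst, hm.1.2⟩ : C.domain) = 0 :=
    Subtype.ext rfl
  rw [hA, hC, LinearPMap.map_zero, LinearPMap.map_zero, zero_add, zero_add]
  rfl

end Main

theorem statement5_aux {H₁ H₂ : Type*}
    [NormedAddCommGroup H₁] [InnerProductSpace ℂ H₁] [CompleteSpace H₁]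
    [NormedAddCommGroup H₂] [InnerProductSpace ℂ H₂] [CompleteSpace H₂]
    (A : H₁ →ₗ.[ℂ] H₁) (B : H₂ →ₗ.[ℂ] H₁) (C : H₁ →ₗ.[ℂ] H₂) (D : H₂ →ₗ.[ℂ] H₂)
    (hAC : A.domain = C.domain) (hBD : B.domain = D.domain)
    (h1 : Dense (A.domain : Set H₁)) (h2 : Dense (B.domain : Set H₂)) :
    blockOpL A.adjoint C.adjoint B.adjoint D.adjoint = (blockOpL A B C D).adjoint ↔
      HasMatrixRepL ((blockOpL A B C D).adjoint) := by
  have hdense := dense_blockOpL_domain hAC hBD h1 h2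
  have hle : blockOpL A.adjoint C.adjoint B.adjoint D.adjoint ≤ (blockOpL A B C D).adjoint :=
    (blockOpL_isFormalAdjoint hAC hBD h1 h2).le_adjoint hdense
  constructor
  · intro heq
    exact ⟨A.adjoint, C.adjoint, B.adjoint, D.adjoint, heq.symm⟩
  · rintro ⟨A', B', C', D', hrep⟩
    have hF := (blockOpL A B C D).adjoint_isFormalAdjoint hdense
    have hdomle : (blockOpL A B C D).adjoint.domain ≤
        (blockOpL A.adjoint C.adjoint B.adjoint D.adjoint).domain := by
      intro y hy
      have hy' : y ∈ (blockOpL A' B' C' D').domain := by rw [← hrep]; exact hy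
      -- the two "coordinate" vectors are in the adjoint domain
      have hm1 : (WithLp.equiv 2 (H₁ × H₂)).symm (y.fst, 0) ∈
          (blockOpL A B C D).adjoint.domain := by
        rw [hrep]
        exact mem_blockOpL_domain.mpr ⟨⟨hy'.1.1, hy'.1.2⟩, ⟨zero_mem _, zero_mem _⟩⟩
      have hm2 : (WithLp.equiv 2 (H₁ × H₂)).symm (0, y.snd) ∈
          (blockOpL A B C D).adjoint.domain := by
        rw [hrep]
        exact mem_blockOpL_domain.mpr ⟨⟨zero_mem _, zero_mem _⟩, ⟨hy'.2.1, hy'.2.2⟩⟩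
      set z₁ := (blockOpL A B C D).adjoint ⟨_, hm1⟩ with hz₁
      set z₂ := (blockOpL A B C D).adjoint ⟨_, hm2⟩ with hz₂
      refine mem_blockOpL_domain.mpr ⟨⟨?_, ?_⟩, ⟨?_, ?_⟩⟩
      · -- y.fst ∈ A†.domain
        refine A.mem_adjoint_domain_of_exists _ ⟨z₁.fst, fun x => ?_⟩
        have hu : (WithLp.equiv 2 (H₁ × H₂)).symm ((x : H₁), 0) ∈ (blockOpL A B C D).domain :=
          mem_blockOpL_domain.mpr ⟨⟨x.2, hAC ▸ x.2⟩, ⟨zero_mem _, zero_mem _⟩⟩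
        have h := hF ⟨_, hm1⟩ ⟨_, hu⟩
        rw [blockOpL_apply_inl hu] at h
        rw [WithLp.prod_inner_apply, WithLp.prod_inner_apply] at h
        simp at h
        exact h
      · -- y.fst ∈ B†.domain
        refine B.mem_adjoint_domain_of_exists _ ⟨z₁.snd, fun x => ?_⟩
        have hu : (WithLp.equiv 2 (H₁ × H₂)).symm (0, (x : H₂)) ∈ (blockOpL A B C D).domain :=
          mem_blockOpL_domain.mpr ⟨⟨zero_mem _, zero_mem _⟩, ⟨x.2, hBD ▸ x.2⟩⟩
        have h := hF ⟨_, hm1⟩ ⟨_, hu⟩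
        rw [blockOpL_apply_inr hu] at h
        rw [WithLp.prod_inner_apply, WithLp.prod_inner_apply] at h
        simp at h
        exact h
      · -- y.snd ∈ C†.domain
        refine C.mem_adjoint_domain_of_exists _ ⟨z₂.fst, fun x => ?_⟩
        have hu : (WithLp.equiv 2 (H₁ × H₂)).symm ((x : H₁), 0) ∈ (blockOpL A B C D).domain :=
          mem_blockOpL_domain.mpr ⟨⟨by rw [hAC]; exact x.2, x.2⟩, ⟨zero_mem _, zero_mem _⟩⟩
        have h := hF ⟨_, hm2⟩ ⟨_, hu⟩
        rw [blockOpL_apply_inl hu] at h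
        rw [WithLp.prod_inner_apply, WithLp.prod_inner_apply] at h
        simp at h
        exact h
      · -- y.snd ∈ D†.domain
        refine D.mem_adjoint_domain_of_exists _ ⟨z₂.snd, fun x => ?_⟩
        have hu : (WithLp.equiv 2 (H₁ × H₂)).symm (0, (x : H₂)) ∈ (blockOpL A B C D).domain :=
          mem_blockOpL_domain.mpr ⟨⟨zero_mem _, zero_mem _⟩, ⟨by rw [hBD]; exact x.2, x.2⟩⟩
        have h := hF ⟨_, hm2⟩ ⟨_, hu⟩
        rw [blockOpL_apply_inr hu] at h
        rw [WithLp.prod_inner_apply, WithLp.prod_inner_apply] at h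
        simp at h
        exact h
    exact LinearPMap.eq_of_le_of_domain_eq hle (le_antisymm hle.1 hdomle)


theorem statement5 {H₁ H₂ : Type*}
    [NormedAddCommGroup H₁] [InnerProductSpace ℂ H₁] [CompleteSpace H₁]
    [NormedAddCommGroup H₂] [InnerProductSpace ℂ H₂] [CompleteSpace H₂]
    (A : H₁ →ₗ.[ℂ] H₁) (B : H₂ →ₗ.[ℂ] H₁) (C : H₁ →ₗ.[ℂ] H₂) (D : H₂ →ₗ.[ℂ] H₂)
    (hAC : A.domain = C.domain) (hBD : B.domain = D.domain)
    (h1 : Dense (A.domain : Set H₁)) (h2 : Dense (B.domain : Set H₂)) :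
    blockOpL A.adjoint C.adjoint B.adjoint D.adjoint = (blockOpL A B C D).adjoint ↔
      HasMatrixRepL ((blockOpL A B C D).adjoint) := by
  exact statement5_aux A B C D hAC hBD h1 h2

end BlockOp
end

section
/- Let H₁ be a complex Hilbert space and let A be a closed, densely defined linear operator on H₁ with D(A) ≠ H₁. Consider the block operator matrix 𝒜 := [[A, 0],[A, 0]] on H₁ × H₁, i.e., the operator with domain D(𝒜) = D(A) × H₁ acting by (x₁, x₂) ↦ (Ax₁, Ax₁). Then: (i) 𝒜 is a closed operator; (ii) D(𝒜*) = {(f₁, f₂) ∈ H₁ × H₁ : f₁ + f₂ ∈ D(A*)} and 𝒜*(f₁, f₂) = (A*(f₁ + f₂), 0); (iii) 𝒜* has no matrix representation, i.e., there exists (f₁, f₂) ∈ D(𝒜*) with (f₁, 0) ∉ D(𝒜*). -/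
open LinearPMap
open scoped LinearPMap

namespace BlockOp

section Helpers

open scoped InnerProductSpace

variable {H₁ : Type*}
    [NormedAddCommGroup H₁] [InnerProductSpace ℂ H₁] [CompleteSpace H₁]
    (A : H₁ →ₗ.[ℂ] H₁)

local notation "e" => WithLp.linearEquiv 2 ℂ (H₁ × H₁)

omit [CompleteSpace H₁] in
theorem mem_blockOpL_dom_iff (v : WithLp 2 (H₁ × H₁)) :
    v ∈ (blockOpL A (0 : H₁ →ₗ.[ℂ] H₁) A (0 : H₁ →ₗ.[ℂ] H₁)).domain ↔
      (e v).1 ∈ A.domain := by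
  simp [blockOpL, pmapCongr, blockOp, Submodule.mem_prod]

omit [CompleteSpace H₁] in
theorem blockOpL_apply_s6 (v : WithLp 2 (H₁ × H₁))
    (hv : v ∈ (blockOpL A (0 : H₁ →ₗ.[ℂ] H₁) A (0 : H₁ →ₗ.[ℂ] H₁)).domain)
    (h1 : (e v).1 ∈ A.domain) :
    (blockOpL A (0 : H₁ →ₗ.[ℂ] H₁) A (0 : H₁ →ₗ.[ℂ] H₁)) ⟨v, hv⟩ =
      (e).symm (A ⟨(e v).1, h1⟩, A ⟨(e v).1, h1⟩) := by
  simp only [blockOpL, pmapCongr, blockOp, LinearPMap.mk_apply, LinearMap.coe_comp,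
    Function.comp_apply, LinearMap.add_apply, LinearMap.prod_apply, Pi.prod]
  have hz : ∀ y : (0 : H₁ →ₗ.[ℂ] H₁).domain, (0 : H₁ →ₗ.[ℂ] H₁).toFun y = 0 := fun _ => rfl
  exact congrArg (e).symm (Prod.ext (add_zero _) (add_zero _))

omit [CompleteSpace H₁] in
theorem blockOpL_isClosed (hA : A.IsClosed) :
    (blockOpL A (0 : H₁ →ₗ.[ℂ] H₁) A (0 : H₁ →ₗ.[ℂ] H₁)).IsClosed := by
  set 𝒜 := blockOpL A (0 : H₁ →ₗ.[ℂ] H₁) A (0 : H₁ →ₗ.[ℂ] H₁)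
  have hgraph : (𝒜.graph : Set (WithLp 2 (H₁ × H₁) × WithLp 2 (H₁ × H₁))) =
      ((fun p : WithLp 2 (H₁ × H₁) × WithLp 2 (H₁ × H₁) => ((e p.1).1, (e p.2).1))
          ⁻¹' (A.graph : Set (H₁ × H₁))) ∩
        {p | (e p.2).1 = (e p.2).2} := by
    ext p
    simp only [SetLike.mem_coe, LinearPMap.mem_graph_iff, Set.mem_inter_iff, Set.mem_preimage,
      Set.mem_setOf_eq]
    constructor
    · rintro ⟨⟨v, hv⟩, hv1, hv2⟩
      have h1 : (e v).1 ∈ A.domain := (mem_blockOpL_dom_iff A v).mp hv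
      rw [blockOpL_apply_s6 A v hv h1] at hv2
      refine ⟨⟨⟨(e v).1, h1⟩, ?_, ?_⟩, ?_⟩
      · rw [← hv1]
      · rw [← hv2]; rfl
      · rw [← hv2]; rfl
    · rintro ⟨⟨z, hz1, hz2⟩, heq⟩
      have h1 : (e p.1).1 ∈ A.domain := by
        rw [show (e p.1).1 = (z : H₁) from hz1.symm]; exact z.2
      refine ⟨⟨p.1, (mem_blockOpL_dom_iff A p.1).mpr h1⟩, rfl, ?_⟩
      rw [blockOpL_apply_s6 A p.1 _ h1]
      have hAz : A ⟨(e p.1).1, h1⟩ = (e p.2).1 := by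
        rw [show (⟨(e p.1).1, h1⟩ : A.domain) = z from Subtype.ext hz1.symm]; exact hz2
      have hpair : ((A ⟨(e p.1).1, h1⟩ : H₁), (A ⟨(e p.1).1, h1⟩ : H₁)) = e p.2 :=
        Prod.ext hAz (hAz.trans heq)
      rw [hpair]
      exact (e).symm_apply_apply p.2
  rw [LinearPMap.IsClosed, hgraph]
  refine IsClosed.inter (IsClosed.preimage ?_ hA) (isClosed_eq ?_ ?_)
  · exact ((continuous_fst.comp ((WithLp.prodContinuousLinearEquiv 2 ℂ H₁ H₁).continuous.comp
      continuous_fst)).prodMk (continuous_fst.comp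
      ((WithLp.prodContinuousLinearEquiv 2 ℂ H₁ H₁).continuous.comp continuous_snd)))
  · exact continuous_fst.comp ((WithLp.prodContinuousLinearEquiv 2 ℂ H₁ H₁).continuous.comp
      continuous_snd)
  · exact continuous_snd.comp ((WithLp.prodContinuousLinearEquiv 2 ℂ H₁ H₁).continuous.comp
      continuous_snd)

theorem blockOpL_dense (hdense : Dense (A.domain : Set H₁)) :
    Dense ((blockOpL A (0 : H₁ →ₗ.[ℂ] H₁) A (0 : H₁ →ₗ.[ℂ] H₁)).domain :
      Set (WithLp 2 (H₁ × H₁))) := by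
  have hset : ((blockOpL A (0 : H₁ →ₗ.[ℂ] H₁) A (0 : H₁ →ₗ.[ℂ] H₁)).domain :
      Set (WithLp 2 (H₁ × H₁))) =
      (fun v : WithLp 2 (H₁ × H₁) => (e v).1) ⁻¹' (A.domain : Set H₁) := by
    ext v; exact mem_blockOpL_dom_iff A v
  rw [hset]
  exact hdense.preimage (isOpenMap_fst.comp
    (WithLp.prodContinuousLinearEquiv 2 ℂ H₁ H₁).toHomeomorph.isOpenMap)

end Helpers

section Helpers2

variable {H₁ : Type*}
    [NormedAddCommGroup H₁] [InnerProductSpace ℂ H₁] [CompleteSpace H₁]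
    (A : H₁ →ₗ.[ℂ] H₁)

local notation "e" => WithLp.linearEquiv 2 ℂ (H₁ × H₁)
local notation "⟪" x ", " y "⟫" => @inner ℂ _ _ x y

theorem blockOpL_inner (a b : H₁) (x : WithLp 2 (H₁ × H₁)) :
    ⟪(e).symm (a, b), x⟫ = ⟪a, ((e) x).1⟫ + ⟪b, ((e) x).2⟫ := rfl

theorem blockOpL_mem_adjoint_of_mem (hdense : Dense (A.domain : Set H₁)) {f₁ f₂ : H₁}
    (hf' : f₁ + f₂ ∈ A.adjoint.domain) :
    (e).symm (f₁, f₂) ∈ (blockOpL A (0 : H₁ →ₗ.[ℂ] H₁) A (0 : H₁ →ₗ.[ℂ] H₁)).adjoint.domain := by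
  apply LinearPMap.mem_adjoint_domain_of_exists
  refine ⟨(e).symm (A.adjoint ⟨f₁ + f₂, hf'⟩, 0), ?_⟩
  rintro ⟨x, hx⟩
  have h1 : ((e) x).1 ∈ A.domain := (mem_blockOpL_dom_iff A x).mp hx
  rw [blockOpL_apply_s6 A x hx h1, blockOpL_inner]
  rw [blockOpL_inner]
  simp only [LinearEquiv.apply_symm_apply, inner_zero_left, add_zero]
  rw [LinearPMap.adjoint_isFormalAdjoint hdense ⟨f₁ + f₂, hf'⟩ ⟨((e) x).1, h1⟩]
  rw [inner_add_left]

theorem blockOpL_mem_adjoint_iff (hdense : Dense (A.domain : Set H₁)) (f₁ f₂ : H₁) :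
    (e).symm (f₁, f₂) ∈ (blockOpL A (0 : H₁ →ₗ.[ℂ] H₁) A (0 : H₁ →ₗ.[ℂ] H₁)).adjoint.domain ↔
      f₁ + f₂ ∈ A.adjoint.domain := by
  refine ⟨fun hf => ?_, blockOpL_mem_adjoint_of_mem A hdense⟩
  set 𝒜 := blockOpL A (0 : H₁ →ₗ.[ℂ] H₁) A (0 : H₁ →ₗ.[ℂ] H₁) with h𝒜
  have h𝒜d := blockOpL_dense A hdense
  set w := 𝒜.adjoint ⟨(e).symm (f₁, f₂), hf⟩ with hw
  apply LinearPMap.mem_adjoint_domain_of_exists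
  refine ⟨((e) w).1, ?_⟩
  intro x
  have hx' : (e).symm ((x : H₁), 0) ∈ 𝒜.domain := by
    rw [mem_blockOpL_dom_iff]
    simpa using x.2
  have h1 : ((e) ((e).symm ((x : H₁), 0))).1 ∈ A.domain := by simpa using x.2
  have key := LinearPMap.adjoint_isFormalAdjoint h𝒜d ⟨(e).symm (f₁, f₂), hf⟩
      ⟨(e).symm ((x : H₁), 0), hx'⟩
  rw [blockOpL_apply_s6 A _ hx' h1] at key
  have hsub : (⟨((e) ((e).symm ((x : H₁), 0))).1, h1⟩ : A.domain) = x := Subtype.ext (by simp)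
  rw [hsub] at key
  have key2 : ⟪w, (e).symm ((x : H₁), 0)⟫ = ⟪f₁, (A x : H₁)⟫ + ⟪f₂, (A x : H₁)⟫ := key
  have hlhs : ⟪w, (e).symm ((x : H₁), 0)⟫ = ⟪((e) w).1, (x : H₁)⟫ := by
    have hww : w = (e).symm ((e) w) := ((e).symm_apply_apply w).symm
    rw [hww, blockOpL_inner]
    simp only [LinearEquiv.apply_symm_apply, inner_zero_right, add_zero]
  rw [hlhs] at key2
  rw [key2, inner_add_left]

theorem blockOpL_adjoint_apply (hdense : Dense (A.domain : Set H₁)) (f₁ f₂ : H₁)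
    (hf : (e).symm (f₁, f₂) ∈ (blockOpL A (0 : H₁ →ₗ.[ℂ] H₁) A (0 : H₁ →ₗ.[ℂ] H₁)).adjoint.domain)
    (hf' : f₁ + f₂ ∈ A.adjoint.domain) :
    (blockOpL A (0 : H₁ →ₗ.[ℂ] H₁) A (0 : H₁ →ₗ.[ℂ] H₁)).adjoint ⟨(e).symm (f₁, f₂), hf⟩ =
      (e).symm (A.adjoint ⟨f₁ + f₂, hf'⟩, 0) := by
  have h𝒜d := blockOpL_dense A hdense
  apply LinearPMap.adjoint_apply_eq h𝒜d
  rintro ⟨x, hx⟩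
  have h1 : ((e) x).1 ∈ A.domain := (mem_blockOpL_dom_iff A x).mp hx
  rw [blockOpL_apply_s6 A x hx h1, blockOpL_inner, blockOpL_inner]
  simp only [LinearEquiv.apply_symm_apply, inner_zero_left, add_zero]
  rw [LinearPMap.adjoint_isFormalAdjoint hdense ⟨f₁ + f₂, hf'⟩ ⟨((e) x).1, h1⟩]
  rw [inner_add_left]

theorem exists_not_mem_adjoint_domain (hA : A.IsClosed) (hdense : Dense (A.domain : Set H₁))
    (hne : A.domain ≠ ⊤) : ∃ g, g ∉ A.adjoint.domain := by
  by_contra hcon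
  push_neg at hcon
  let g : H₁ →ₗ[ℂ] H₁ :=
    { toFun := fun x => A.adjoint ⟨x, hcon x⟩
      map_add' := fun x y => by
        show A.adjoint ⟨x + y, hcon _⟩ = A.adjoint ⟨x, hcon x⟩ + A.adjoint ⟨y, hcon y⟩
        rw [show (⟨x + y, hcon _⟩ : A.adjoint.domain) = ⟨x, hcon x⟩ + ⟨y, hcon y⟩ from rfl,
          LinearPMap.map_add]
      map_smul' := fun c x => by
        show A.adjoint ⟨c • x, hcon _⟩ = c • A.adjoint ⟨x, hcon x⟩
        rw [show (⟨c • x, hcon _⟩ : A.adjoint.domain) = c • (⟨x, hcon x⟩ : A.adjoint.domain)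
          from rfl, LinearPMap.map_smul] }
  have hg : ∀ (y : H₁) (x : A.domain), ⟪g y, (x : H₁)⟫ = ⟪y, A x⟫ := fun y x =>
    LinearPMap.adjoint_isFormalAdjoint hdense ⟨y, hcon y⟩ x
  have hclosed : IsClosed (g.graph : Set (H₁ × H₁)) := by
    have hgr : (g.graph : Set (H₁ × H₁)) =
        ⋂ (v : A.domain), {p : H₁ × H₁ | ⟪p.2, (v : H₁)⟫ = ⟪p.1, A v⟫} := by
      ext p
      simp only [SetLike.mem_coe, LinearMap.mem_graph_iff, Set.mem_iInter, Set.mem_setOf_eq]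
      constructor
      · intro hp v
        rw [hp]
        exact hg p.1 v
      · intro hv
        have hz : ∀ v : A.domain, ⟪p.2 - g p.1, (v : H₁)⟫ = 0 := fun v => by
          rw [inner_sub_left, hv v, hg p.1 v, sub_self]
        have := Dense.eq_zero_of_inner_left ℂ hdense (fun v hv => hz ⟨v, hv⟩)
        rw [sub_eq_zero] at this
        exact this
    rw [hgr]
    exact isClosed_iInter fun v => isClosed_eq
      (continuous_snd.inner continuous_const) (continuous_fst.inner continuous_const)
  let f0 := ContinuousLinearMap.ofIsClosedGraph hclosed
  have hf0 : ⇑f0 = ⇑g := ContinuousLinearMap.coeFn_ofIsClosedGraph hclosed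
  let h := ContinuousLinearMap.adjoint f0
  have hAx : ∀ x : A.domain, A x = h (x : H₁) := by
    intro x
    refine ext_inner_left ℂ fun y => ?_
    rw [show ⟪y, h (x : H₁)⟫ = ⟪f0 y, (x : H₁)⟫ from
      ContinuousLinearMap.adjoint_inner_right f0 y (x : H₁), hf0]
    exact (hg y x).symm
  have hdomclosed : IsClosed (A.domain : Set H₁) := by
    have hset : (A.domain : Set H₁) = (fun x => (x, h x)) ⁻¹' (A.graph : Set (H₁ × H₁)) := by
      ext x
      simp only [Set.mem_preimage, SetLike.mem_coe, LinearPMap.mem_graph_iff]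
      constructor
      · intro hx
        exact ⟨⟨x, hx⟩, rfl, hAx ⟨x, hx⟩⟩
      · rintro ⟨z, hz1, hz2⟩
        rw [← hz1]
        exact z.2
    rw [hset]
    exact IsClosed.preimage (continuous_id.prodMk h.continuous) hA
  apply hne
  have huniv : (A.domain : Set H₁) = Set.univ := by
    rw [← hdomclosed.closure_eq]
    exact hdense.closure_eq
  rw [Submodule.eq_top_iff']
  intro x
  exact Set.eq_univ_iff_forall.mp huniv x

end Helpers2

theorem statement6 {H₁ : Type*}
    [NormedAddCommGroup H₁] [InnerProductSpace ℂ H₁] [CompleteSpace H₁]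
    (A : H₁ →ₗ.[ℂ] H₁) (hA : A.IsClosed) (hdense : Dense (A.domain : Set H₁))
    (hne : A.domain ≠ ⊤) :
    (blockOpL A (0 : H₁ →ₗ.[ℂ] H₁) A (0 : H₁ →ₗ.[ℂ] H₁)).IsClosed ∧
    (∀ f₁ f₂ : H₁,
      (WithLp.linearEquiv 2 ℂ (H₁ × H₁)).symm (f₁, f₂) ∈
          (blockOpL A (0 : H₁ →ₗ.[ℂ] H₁) A (0 : H₁ →ₗ.[ℂ] H₁)).adjoint.domain ↔
        f₁ + f₂ ∈ A.adjoint.domain) ∧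
    (∀ (f₁ f₂ : H₁)
      (hf : (WithLp.linearEquiv 2 ℂ (H₁ × H₁)).symm (f₁, f₂) ∈
        (blockOpL A (0 : H₁ →ₗ.[ℂ] H₁) A (0 : H₁ →ₗ.[ℂ] H₁)).adjoint.domain)
      (hf' : f₁ + f₂ ∈ A.adjoint.domain),
      (blockOpL A (0 : H₁ →ₗ.[ℂ] H₁) A (0 : H₁ →ₗ.[ℂ] H₁)).adjoint
          ⟨(WithLp.linearEquiv 2 ℂ (H₁ × H₁)).symm (f₁, f₂), hf⟩ =
        (WithLp.linearEquiv 2 ℂ (H₁ × H₁)).symm (A.adjoint ⟨f₁ + f₂, hf'⟩, 0)) ∧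
    (∃ f₁ f₂ : H₁,
      (WithLp.linearEquiv 2 ℂ (H₁ × H₁)).symm (f₁, f₂) ∈
        (blockOpL A (0 : H₁ →ₗ.[ℂ] H₁) A (0 : H₁ →ₗ.[ℂ] H₁)).adjoint.domain ∧
      (WithLp.linearEquiv 2 ℂ (H₁ × H₁)).symm (f₁, 0) ∉
        (blockOpL A (0 : H₁ →ₗ.[ℂ] H₁) A (0 : H₁ →ₗ.[ℂ] H₁)).adjoint.domain) := by
  refine ⟨blockOpL_isClosed A hA, fun f₁ f₂ => blockOpL_mem_adjoint_iff A hdense f₁ f₂,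
    fun f₁ f₂ hf hf' => blockOpL_adjoint_apply A hdense f₁ f₂ hf hf', ?_⟩
  obtain ⟨g, hg⟩ := exists_not_mem_adjoint_domain A hA hdense hne
  refine ⟨g, -g, ?_, ?_⟩
  · exact blockOpL_mem_adjoint_of_mem A hdense
      (by simpa using A.adjoint.domain.zero_mem)
  · intro hmem
    exact hg (by simpa using (blockOpL_mem_adjoint_iff A hdense g 0).mp hmem)

end BlockOp
end

section
/- Let H₁, H₂ be complex Hilbert spaces, H := H₁ × H₂, and let 𝒜 = [[A, B],[C, D]] be a block operator matrix satisfying the basic assumptions. Suppose D = D* and D(D) ⊆ D(B). Then the induced operator 𝒜 is self-adjoint if and only if there exists λ ∈ ρ(D) such that (A − B(D−λ)⁻¹C)* = A − B(D−λ̄)⁻¹C, where both Schur complements have domain D(A) ∩ D(C); moreover, in this case the equality holds for every λ ∈ ρ(D). -/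
open LinearPMap
open scoped LinearPMap

set_option linter.unusedSectionVars false
open LinearPMap
open scoped LinearPMap InnerProductSpace ComplexConjugate

namespace BlockOp
section Aux
variable {H₁ H₂ : Type*}
    [NormedAddCommGroup H₁] [InnerProductSpace ℂ H₁] [CompleteSpace H₁]
    [NormedAddCommGroup H₂] [InnerProductSpace ℂ H₂] [CompleteSpace H₂]
    {A : H₁ →ₗ.[ℂ] H₁} {B : H₂ →ₗ.[ℂ] H₁} {C : H₁ →ₗ.[ℂ] H₂} {D : H₂ →ₗ.[ℂ] H₂}
    {lam : ℂ} {R R' : H₂ →L[ℂ] H₂}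

lemma pair_of_le {E F : Type*} [NormedAddCommGroup E] [InnerProductSpace ℂ E] [CompleteSpace E]
    [NormedAddCommGroup F] [InnerProductSpace ℂ F]
    {T : E →ₗ.[ℂ] F} {S : F →ₗ.[ℂ] E} (hTd : Dense (T.domain : Set E))
    (h : S ≤ T.adjoint) (x : S.domain) (y : T.domain) :
    ⟪(S x : E), (y : E)⟫_ℂ = ⟪(x : F), T y⟫_ℂ := by
  have hx : (x : F) ∈ T.adjoint.domain := h.1 x.2
  have hval : S x = T.adjoint ⟨x, hx⟩ := h.2 rfl
  rw [hval]
  exact LinearPMap.adjoint_isFormalAdjoint hTd ⟨(x : F), hx⟩ y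

lemma res_D_apply (hR : IsResolventAt D lam R) (z : H₂) :
    D ⟨R z, hR.mem z⟩ = z + lam • R z :=
  eq_add_of_sub_eq (hR.right_inv z)

lemma res_adj (hDd : Dense (D.domain : Set H₂)) (hDsym : D ≤ D.adjoint)
    (hR : IsResolventAt D lam R) (hR' : IsResolventAt D (starRingEnd ℂ lam) R')
    (a b : H₂) : ⟪R' a, b⟫_ℂ = ⟪a, R b⟫_ℂ := by
  have pairD := pair_of_le hDd hDsym
  have hp : ⟪(D ⟨R' a, hR'.mem a⟩ : H₂), R b⟫_ℂ = ⟪(R' a : H₂), D ⟨R b, hR.mem b⟩⟫_ℂ :=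
    pairD ⟨R' a, hR'.mem a⟩ ⟨R b, hR.mem b⟩
  have e1 := hR.right_inv b
  have e2 := hR'.right_inv a
  calc ⟪R' a, b⟫_ℂ = ⟪R' a, D ⟨R b, hR.mem b⟩ - lam • R b⟫_ℂ := by rw [e1]
    _ = ⟪(R' a : H₂), D ⟨R b, hR.mem b⟩⟫_ℂ - lam * ⟪(R' a : H₂), R b⟫_ℂ := by
        rw [inner_sub_right, inner_smul_right]
    _ = ⟪(D ⟨R' a, hR'.mem a⟩ : H₂), R b⟫_ℂ - lam * ⟪(R' a : H₂), R b⟫_ℂ := by rw [hp]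
    _ = ⟪(D ⟨R' a, hR'.mem a⟩ : H₂) - (starRingEnd ℂ lam) • R' a, R b⟫_ℂ := by
        rw [inner_sub_left, inner_smul_left, starRingEnd_self_apply]
    _ = ⟪a, R b⟫_ℂ := by rw [e2]

/-- Composition `B ∘ R` as a continuous linear map. -/
lemma exists_BR (hBc : B.IsClosable) (hDB : D.domain ≤ B.domain)
    {mu : ℂ} (hR : IsResolventAt D mu R) :
    ∃ G : H₂ →L[ℂ] H₁, ∀ y, G y = B ⟨R y, hDB (hR.mem y)⟩ := by
  set g : H₂ →ₗ[ℂ] H₁ :=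
    { toFun := fun y => B ⟨R y, hDB (hR.mem y)⟩
      map_add' := fun a b => by
        have h : (⟨R (a + b), hDB (hR.mem (a + b))⟩ : B.domain)
            = ⟨R a, hDB (hR.mem a)⟩ + ⟨R b, hDB (hR.mem b)⟩ := by
          ext; simp
        show B ⟨R (a + b), hDB (hR.mem (a + b))⟩
            = B ⟨R a, hDB (hR.mem a)⟩ + B ⟨R b, hDB (hR.mem b)⟩
        rw [h]; exact B.map_add _ _
      map_smul' := fun c a => by
        have h : (⟨R (c • a), hDB (hR.mem (c • a))⟩ : B.domain)
            = c • (⟨R a, hDB (hR.mem a)⟩ : B.domain) := by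
          ext; simp
        show B ⟨R (c • a), hDB (hR.mem (c • a))⟩ = c • B ⟨R a, hDB (hR.mem a)⟩
        rw [h]; exact B.map_smul _ _ } with hg
  have hcont : Continuous g := by
    apply LinearMap.continuous_of_seq_closed_graph
    intro u x y hux hgy
    have hRa : Filter.Tendsto (fun n => R (u n)) Filter.atTop (nhds (R x)) :=
      (R.continuous.tendsto x).comp hux
    have hmem : ((R x : H₂), y) ∈ closure (B.graph : Set (H₂ × H₁)) := by
      refine mem_closure_of_tendsto (hRa.prodMk_nhds hgy) ?_
      exact Filter.Eventually.of_forall fun n => B.mem_graph ⟨R (u n), hDB (hR.mem (u n))⟩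
    rw [← Submodule.topologicalClosure_coe, hBc.graph_closure_eq_closure_graph] at hmem
    obtain ⟨z, hz1, hz2⟩ := B.closure.mem_graph_iff.mp hmem
    have hz1' : (z : H₂) = R x := hz1
    have hxd : R x ∈ B.closure.domain := hz1' ▸ z.2
    have hcl : B.closure ⟨R x, hxd⟩ = y := by
      have hzz : (⟨R x, hxd⟩ : B.closure.domain) = z := Subtype.ext hz1'.symm
      rw [hzz]; exact hz2
    have hBval : B ⟨R x, hDB (hR.mem x)⟩ = B.closure ⟨R x, hxd⟩ := B.le_closure.2 rfl
    exact (hBval.trans hcl).symm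
  exact ⟨⟨g, hcont⟩, fun y => rfl⟩

lemma mem_schur_iff (hDB : D.domain ≤ B.domain) {mu : ℂ} (hR : IsResolventAt D mu R) {x : H₁} :
    x ∈ (A - pcomp B ((R : H₂ →ₗ[ℂ] H₂).compPMap C)).domain ↔
      x ∈ A.domain ∧ x ∈ C.domain := by
  constructor
  · rintro ⟨hA, hC, -⟩; exact ⟨hA, hC⟩
  · rintro ⟨hA, hC⟩; exact ⟨hA, hC, hDB (hR.mem _)⟩

lemma schur_apply (hDB : D.domain ≤ B.domain) {mu : ℂ} (hR : IsResolventAt D mu R) {x : H₁}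
    (hx : x ∈ (A - pcomp B ((R : H₂ →ₗ[ℂ] H₂).compPMap C)).domain)
    (hA : x ∈ A.domain) (hC : x ∈ C.domain) (hB : R (C ⟨x, hC⟩) ∈ B.domain) :
    (A - pcomp B ((R : H₂ →ₗ[ℂ] H₂).compPMap C)) ⟨x, hx⟩
      = A ⟨x, hA⟩ - B ⟨R (C ⟨x, hC⟩), hB⟩ := rfl

end Aux
end BlockOp
namespace BlockOp
section Aux2
variable {H₁ H₂ : Type*}
    [NormedAddCommGroup H₁] [InnerProductSpace ℂ H₁] [CompleteSpace H₁]
    [NormedAddCommGroup H₂] [InnerProductSpace ℂ H₂] [CompleteSpace H₂]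
    {A : H₁ →ₗ.[ℂ] H₁} {B : H₂ →ₗ.[ℂ] H₁} {C : H₁ →ₗ.[ℂ] H₂} {D : H₂ →ₗ.[ℂ] H₂}
    {lam : ℂ} {R R' : H₂ →L[ℂ] H₂}

lemma blockOpL_apply_fst' (x : (blockOpL A B C D).domain) :
    ((blockOpL A B C D x : WithLp 2 (H₁ × H₂))).fst
      = A ⟨(x : WithLp 2 (H₁ × H₂)).fst, x.2.1.1⟩
        + B ⟨(x : WithLp 2 (H₁ × H₂)).snd, x.2.2.1⟩ := rfl

lemma blockOpL_apply_snd' (x : (blockOpL A B C D).domain) :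
    ((blockOpL A B C D x : WithLp 2 (H₁ × H₂))).snd
      = C ⟨(x : WithLp 2 (H₁ × H₂)).fst, x.2.1.2⟩
        + D ⟨(x : WithLp 2 (H₁ × H₂)).snd, x.2.2.2⟩ := rfl

lemma dense_components (A : H₁ →ₗ.[ℂ] H₁) (B : H₂ →ₗ.[ℂ] H₁) (C : H₁ →ₗ.[ℂ] H₂)
    (D : H₂ →ₗ.[ℂ] H₂)
    (hdense : Dense ((blockOpL A B C D).domain : Set (WithLp 2 (H₁ × H₂)))) :
    Dense ((A.domain ⊓ C.domain : Submodule ℂ H₁) : Set H₁)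
      ∧ Dense ((B.domain ⊓ D.domain : Submodule ℂ H₂) : Set H₂) := by
  set e := WithLp.prodContinuousLinearEquiv 2 ℂ H₁ H₂ with he
  have hd : Dense (⇑e '' ((blockOpL A B C D).domain : Set (WithLp 2 (H₁ × H₂)))) :=
    (e.toHomeomorph.isDenseEmbedding.dense_image).mpr hdense
  have himg : (⇑e '' ((blockOpL A B C D).domain : Set (WithLp 2 (H₁ × H₂))))
      = (((A.domain ⊓ C.domain : Submodule ℂ H₁) : Set H₁) ×ˢ
          ((B.domain ⊓ D.domain : Submodule ℂ H₂) : Set H₂)) := by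
    ext y
    constructor
    · rintro ⟨x, hx, rfl⟩; exact hx
    · intro hy; exact ⟨(WithLp.equiv 2 _).symm y, hy, rfl⟩
  rw [himg] at hd
  constructor
  · intro a
    have := hd (a, 0)
    rw [closure_prod_eq] at this
    exact this.1
  · intro b
    have := hd (0, b)
    rw [closure_prod_eq] at this
    exact this.2

lemma Tsym (hAd : Dense (A.domain : Set H₁)) (hCd : Dense (C.domain : Set H₁))
    (hDd : Dense (D.domain : Set H₂))
    (hAsym : A ≤ A.adjoint) (hBC : B ≤ C.adjoint) (hDsym : D ≤ D.adjoint) :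
    (blockOpL A B C D).IsFormalAdjoint (blockOpL A B C D) := by
  intro x y
  rw [WithLp.prod_inner_apply, WithLp.prod_inner_apply]; simp only [WithLp.ofLp_fst, WithLp.ofLp_snd]; rw [blockOpL_apply_fst' x,
    blockOpL_apply_snd' x, blockOpL_apply_fst' y, blockOpL_apply_snd' y,
    inner_add_left, inner_add_left, inner_add_right, inner_add_right]
  have h1 : ⟪(A ⟨(x : WithLp 2 (H₁ × H₂)).fst, x.2.1.1⟩ : H₁),
        (y : WithLp 2 (H₁ × H₂)).fst⟫_ℂ
      = ⟪((x : WithLp 2 (H₁ × H₂)).fst : H₁), A ⟨(y : WithLp 2 (H₁ × H₂)).fst, y.2.1.1⟩⟫_ℂ :=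
    pair_of_le hAd hAsym ⟨_, x.2.1.1⟩ ⟨_, y.2.1.1⟩
  have h2 : ⟪(B ⟨(x : WithLp 2 (H₁ × H₂)).snd, x.2.2.1⟩ : H₁),
        (y : WithLp 2 (H₁ × H₂)).fst⟫_ℂ
      = ⟪((x : WithLp 2 (H₁ × H₂)).snd : H₂), C ⟨(y : WithLp 2 (H₁ × H₂)).fst, y.2.1.2⟩⟫_ℂ :=
    pair_of_le hCd hBC ⟨_, x.2.2.1⟩ ⟨_, y.2.1.2⟩
  have h3 : ⟪(B ⟨(y : WithLp 2 (H₁ × H₂)).snd, y.2.2.1⟩ : H₁),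
        (x : WithLp 2 (H₁ × H₂)).fst⟫_ℂ
      = ⟪((y : WithLp 2 (H₁ × H₂)).snd : H₂), C ⟨(x : WithLp 2 (H₁ × H₂)).fst, x.2.1.2⟩⟫_ℂ :=
    pair_of_le hCd hBC ⟨_, y.2.2.1⟩ ⟨_, x.2.1.2⟩
  have h4 : ⟪(D ⟨(x : WithLp 2 (H₁ × H₂)).snd, x.2.2.2⟩ : H₂),
        (y : WithLp 2 (H₁ × H₂)).snd⟫_ℂ
      = ⟪((x : WithLp 2 (H₁ × H₂)).snd : H₂), D ⟨(y : WithLp 2 (H₁ × H₂)).snd, y.2.2.2⟩⟫_ℂ :=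
    pair_of_le hDd hDsym ⟨_, x.2.2.2⟩ ⟨_, y.2.2.2⟩
  have h3' : ⟪((x : WithLp 2 (H₁ × H₂)).fst : H₁),
        B ⟨(y : WithLp 2 (H₁ × H₂)).snd, y.2.2.1⟩⟫_ℂ
      = ⟪(C ⟨(x : WithLp 2 (H₁ × H₂)).fst, x.2.1.2⟩ : H₂),
        (y : WithLp 2 (H₁ × H₂)).snd⟫_ℂ := by
    rw [← inner_conj_symm, h3, inner_conj_symm]
  rw [h1, h2, h3', h4]
  ring

lemma T_le_adjoint (hAd : Dense (A.domain : Set H₁)) (hCd : Dense (C.domain : Set H₁))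
    (hDd : Dense (D.domain : Set H₂))
    (hAsym : A ≤ A.adjoint) (hBC : B ≤ C.adjoint) (hDsym : D ≤ D.adjoint)
    (hdense : Dense ((blockOpL A B C D).domain : Set (WithLp 2 (H₁ × H₂)))) :
    blockOpL A B C D ≤ (blockOpL A B C D).adjoint :=
  (Tsym hAd hCd hDd hAsym hBC hDsym).le_adjoint hdense

end Aux2
end BlockOp
namespace BlockOp
section Aux3
variable {H₁ H₂ : Type*}
    [NormedAddCommGroup H₁] [InnerProductSpace ℂ H₁] [CompleteSpace H₁]
    [NormedAddCommGroup H₂] [InnerProductSpace ℂ H₂] [CompleteSpace H₂]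
    {A : H₁ →ₗ.[ℂ] H₁} {B : H₂ →ₗ.[ℂ] H₁} {C : H₁ →ₗ.[ℂ] H₂} {D : H₂ →ₗ.[ℂ] H₂}
    {lam : ℂ} {R R' : H₂ →L[ℂ] H₂}

lemma pair_mem (hDB : D.domain ≤ B.domain) {mu : ℂ} (hR : IsResolventAt D mu R) {x₁ : H₁}
    (hA : x₁ ∈ A.domain) (hC : x₁ ∈ C.domain) :
    (WithLp.toLp 2 (x₁, -(R (C ⟨x₁, hC⟩))) : WithLp 2 (H₁ × H₂)) ∈ (blockOpL A B C D).domain :=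
  ⟨⟨hA, hC⟩, neg_mem (hDB (hR.mem _)), neg_mem (hR.mem _)⟩

lemma T_pair_fst (hDB : D.domain ≤ B.domain) {mu : ℂ} (hR : IsResolventAt D mu R) {x₁ : H₁}
    (hA : x₁ ∈ A.domain) (hC : x₁ ∈ C.domain) :
    ((blockOpL A B C D ⟨(WithLp.toLp 2 (x₁, -(R (C ⟨x₁, hC⟩))) : WithLp 2 (H₁ × H₂)),
        pair_mem hDB hR hA hC⟩ : WithLp 2 (H₁ × H₂))).fst
      = A ⟨x₁, hA⟩ - B ⟨R (C ⟨x₁, hC⟩), hDB (hR.mem _)⟩ := by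
  have h0 : ((blockOpL A B C D ⟨(WithLp.toLp 2 (x₁, -(R (C ⟨x₁, hC⟩))) : WithLp 2 (H₁ × H₂)),
        pair_mem hDB hR hA hC⟩ : WithLp 2 (H₁ × H₂))).fst
      = A ⟨x₁, hA⟩ + B (-(⟨R (C ⟨x₁, hC⟩), hDB (hR.mem _)⟩ : B.domain)) := rfl
  rw [h0, LinearPMap.map_neg, ← sub_eq_add_neg]

lemma T_pair_snd (hDB : D.domain ≤ B.domain) {mu : ℂ} (hR : IsResolventAt D mu R) {x₁ : H₁}
    (hA : x₁ ∈ A.domain) (hC : x₁ ∈ C.domain) :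
    ((blockOpL A B C D ⟨(WithLp.toLp 2 (x₁, -(R (C ⟨x₁, hC⟩))) : WithLp 2 (H₁ × H₂)),
        pair_mem hDB hR hA hC⟩ : WithLp 2 (H₁ × H₂))).snd
      = -(mu • R (C ⟨x₁, hC⟩)) := by
  have h0 : ((blockOpL A B C D ⟨(WithLp.toLp 2 (x₁, -(R (C ⟨x₁, hC⟩))) : WithLp 2 (H₁ × H₂)),
        pair_mem hDB hR hA hC⟩ : WithLp 2 (H₁ × H₂))).snd
      = C ⟨x₁, hC⟩ + D (-(⟨R (C ⟨x₁, hC⟩), hR.mem _⟩ : D.domain)) := rfl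
  rw [h0, LinearPMap.map_neg, res_D_apply hR]
  abel

lemma Gadj_eq (hCd : Dense (C.domain : Set H₁)) (hBC : B ≤ C.adjoint)
    (hDd : Dense (D.domain : Set H₂)) (hDsym : D ≤ D.adjoint)
    (hDB : D.domain ≤ B.domain)
    (hR : IsResolventAt D lam R) (hR' : IsResolventAt D (starRingEnd ℂ lam) R')
    {G : H₂ →L[ℂ] H₁} (hG : ∀ y, G y = B ⟨R y, hDB (hR.mem y)⟩) {u : H₁}
    (huC : u ∈ C.domain) :
    ContinuousLinearMap.adjoint G u = R' (C ⟨u, huC⟩) := by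
  apply ext_inner_right ℂ
  intro y
  have hp : ⟪(B ⟨R y, hDB (hR.mem y)⟩ : H₁), u⟫_ℂ = ⟪(R y : H₂), C ⟨u, huC⟩⟫_ℂ :=
    pair_of_le hCd hBC ⟨_, hDB (hR.mem y)⟩ ⟨u, huC⟩
  rw [ContinuousLinearMap.adjoint_inner_left, hG y,
    res_adj hDd hDsym hR hR' (C ⟨u, huC⟩) y, ← inner_conj_symm, hp, inner_conj_symm]

lemma schur_isFormalAdjoint (hAd : Dense (A.domain : Set H₁)) (hCd : Dense (C.domain : Set H₁))
    (hDd : Dense (D.domain : Set H₂))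
    (hAsym : A ≤ A.adjoint) (hBC : B ≤ C.adjoint) (hDsym : D ≤ D.adjoint)
    (hDB : D.domain ≤ B.domain)
    (hR : IsResolventAt D lam R) (hR' : IsResolventAt D (starRingEnd ℂ lam) R') :
    (A - pcomp B ((R : H₂ →ₗ[ℂ] H₂).compPMap C)).IsFormalAdjoint
      (A - pcomp B ((R' : H₂ →ₗ[ℂ] H₂).compPMap C)) := by
  rintro ⟨x₁, hx⟩ ⟨u₁, hu⟩
  obtain ⟨hC0, hB0⟩ := hx.2
  have hA : x₁ ∈ A.domain := hx.1
  have hC : x₁ ∈ C.domain := hC0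
  obtain ⟨hC0', hB0'⟩ := hu.2
  have hA' : u₁ ∈ A.domain := hu.1
  have hC' : u₁ ∈ C.domain := hC0'
  have hTs := Tsym hAd hCd hDd hAsym hBC hDsym
    ⟨(WithLp.toLp 2 (x₁, -(R (C ⟨x₁, hC⟩))) : WithLp 2 (H₁ × H₂)), pair_mem hDB hR hA hC⟩
    ⟨(WithLp.toLp 2 (u₁, -(R' (C ⟨u₁, hC'⟩))) : WithLp 2 (H₁ × H₂)), pair_mem hDB hR' hA' hC'⟩
  rw [WithLp.prod_inner_apply, WithLp.prod_inner_apply] at hTs; simp only [WithLp.ofLp_fst, WithLp.ofLp_snd] at hTs; rw [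
    T_pair_fst hDB hR hA hC, T_pair_snd hDB hR hA hC,
    T_pair_fst hDB hR' hA' hC', T_pair_snd hDB hR' hA' hC'] at hTs
  have hTs' : ⟪(A ⟨x₁, hA⟩ - B ⟨R (C ⟨x₁, hC⟩), hDB (hR.mem _)⟩ : H₁), u₁⟫_ℂ
        + ⟪-(lam • R (C ⟨x₁, hC⟩)), -(R' (C ⟨u₁, hC'⟩))⟫_ℂ
      = ⟪(x₁ : H₁), A ⟨u₁, hA'⟩ - B ⟨R' (C ⟨u₁, hC'⟩), hDB (hR'.mem _)⟩⟫_ℂ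
        + ⟪-(R (C ⟨x₁, hC⟩)), -((starRingEnd ℂ lam) • R' (C ⟨u₁, hC'⟩))⟫_ℂ := hTs
  have hsec : ⟪-(lam • R (C ⟨x₁, hC⟩)), -(R' (C ⟨u₁, hC'⟩))⟫_ℂ
      = ⟪-(R (C ⟨x₁, hC⟩)), -((starRingEnd ℂ lam) • R' (C ⟨u₁, hC'⟩))⟫_ℂ := by
    rw [inner_neg_neg, inner_neg_neg, inner_smul_left, inner_smul_right]
  have hgoal : (A - pcomp B ((R : H₂ →ₗ[ℂ] H₂).compPMap C)) ⟨x₁, hx⟩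
      = A ⟨x₁, hA⟩ - B ⟨R (C ⟨x₁, hC⟩), hDB (hR.mem _)⟩ :=
    schur_apply hDB hR hx hA hC (hDB (hR.mem _))
  have hgoal' : (A - pcomp B ((R' : H₂ →ₗ[ℂ] H₂).compPMap C)) ⟨u₁, hu⟩
      = A ⟨u₁, hA'⟩ - B ⟨R' (C ⟨u₁, hC'⟩), hDB (hR'.mem _)⟩ :=
    schur_apply hDB hR' hu hA' hC' (hDB (hR'.mem _))
  rw [hgoal, hgoal']
  linear_combination hTs' - hsec

end Aux3
end BlockOp
namespace BlockOp
section Aux4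
variable {H₁ H₂ : Type*}
    [NormedAddCommGroup H₁] [InnerProductSpace ℂ H₁] [CompleteSpace H₁]
    [NormedAddCommGroup H₂] [InnerProductSpace ℂ H₂] [CompleteSpace H₂]
    {A : H₁ →ₗ.[ℂ] H₁} {B : H₂ →ₗ.[ℂ] H₁} {C : H₁ →ₗ.[ℂ] H₂} {D : H₂ →ₗ.[ℂ] H₂}
    {lam : ℂ} {R R' : H₂ →L[ℂ] H₂}

lemma mem_pair0 (hDB : D.domain ≤ B.domain) {x₂ : H₂} (hx₂ : x₂ ∈ D.domain) :
    (WithLp.toLp 2 ((0 : H₁), x₂) : WithLp 2 (H₁ × H₂)) ∈ (blockOpL A B C D).domain :=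
  ⟨⟨zero_mem _, zero_mem _⟩, hDB hx₂, hx₂⟩

lemma T_pair0_fst (hDB : D.domain ≤ B.domain) {x₂ : H₂} (hx₂ : x₂ ∈ D.domain) :
    ((blockOpL A B C D ⟨(WithLp.toLp 2 ((0 : H₁), x₂) : WithLp 2 (H₁ × H₂)), mem_pair0 hDB hx₂⟩ :
      WithLp 2 (H₁ × H₂))).fst = B ⟨x₂, hDB hx₂⟩ := by
  have h0 : ((blockOpL A B C D ⟨(WithLp.toLp 2 ((0 : H₁), x₂) : WithLp 2 (H₁ × H₂)), mem_pair0 hDB hx₂⟩ :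
      WithLp 2 (H₁ × H₂))).fst
      = A (0 : A.domain) + B ⟨x₂, hDB hx₂⟩ := rfl
  rw [h0, LinearPMap.map_zero, zero_add]

lemma T_pair0_snd (hDB : D.domain ≤ B.domain) {x₂ : H₂} (hx₂ : x₂ ∈ D.domain) :
    ((blockOpL A B C D ⟨(WithLp.toLp 2 ((0 : H₁), x₂) : WithLp 2 (H₁ × H₂)), mem_pair0 hDB hx₂⟩ :
      WithLp 2 (H₁ × H₂))).snd = D ⟨x₂, hx₂⟩ := by
  have h0 : ((blockOpL A B C D ⟨(WithLp.toLp 2 ((0 : H₁), x₂) : WithLp 2 (H₁ × H₂)), mem_pair0 hDB hx₂⟩ :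
      WithLp 2 (H₁ × H₂))).snd
      = C (0 : C.domain) + D ⟨x₂, hx₂⟩ := rfl
  rw [h0, LinearPMap.map_zero, zero_add]

/-- Step 1: the second component relation satisfied by any element of `D(T†)`. -/
lemma step1 (hdense : Dense ((blockOpL A B C D).domain : Set (WithLp 2 (H₁ × H₂))))
    (hDB : D.domain ≤ B.domain) (hR : IsResolventAt D lam R)
    {G : H₂ →L[ℂ] H₁} (hG : ∀ y, G y = B ⟨R y, hDB (hR.mem y)⟩)
    {Z : WithLp 2 (H₁ × H₂)} (hZ : Z ∈ (blockOpL A B C D).adjoint.domain) (x₂ : D.domain) :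
    ⟪(ContinuousLinearMap.adjoint G) Z.fst + Z.snd, (D x₂ : H₂)⟫_ℂ
      = ⟪(((blockOpL A B C D).adjoint ⟨Z, hZ⟩ : WithLp 2 (H₁ × H₂))).snd
          + (starRingEnd ℂ lam) • (ContinuousLinearMap.adjoint G) Z.fst, (x₂ : H₂)⟫_ℂ := by
  have h := LinearPMap.adjoint_isFormalAdjoint hdense ⟨Z, hZ⟩
    ⟨(WithLp.toLp 2 ((0 : H₁), (x₂ : H₂)) : WithLp 2 (H₁ × H₂)), mem_pair0 hDB x₂.2⟩
  rw [WithLp.prod_inner_apply, WithLp.prod_inner_apply] at h; simp only [WithLp.ofLp_fst, WithLp.ofLp_snd] at h; rw [T_pair0_fst hDB x₂.2,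
    T_pair0_snd hDB x₂.2] at h
  have hBx : (B ⟨(x₂ : H₂), hDB x₂.2⟩ : H₁) = G (D x₂ - lam • (x₂ : H₂)) := by
    rw [hG]
    congr 1
    exact Subtype.ext (hR.left_inv x₂).symm
  rw [hBx] at h
  have h2 : ⟪(Z.fst : H₁), G (D x₂ - lam • (x₂ : H₂))⟫_ℂ
      = ⟪((ContinuousLinearMap.adjoint G) Z.fst : H₂), D x₂ - lam • (x₂ : H₂)⟫_ℂ :=
    (ContinuousLinearMap.adjoint_inner_left G _ _).symm
  rw [h2] at h
  have h3 : ⟪(((blockOpL A B C D).adjoint ⟨Z, hZ⟩ : WithLp 2 (H₁ × H₂))).fst,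
      ((0 : H₁) : H₁)⟫_ℂ = 0 := inner_zero_right _
  simp only [inner_add_left, inner_smul_left, inner_sub_right, inner_smul_right,
    starRingEnd_self_apply, Subtype.coe_eta] at h ⊢
  have h4 : ⟪(((blockOpL A B C D).adjoint ⟨Z, hZ⟩ : WithLp 2 (H₁ × H₂))).fst,
      (WithLp.toLp 2 ((0 : H₁), (x₂ : H₂)) : WithLp 2 (H₁ × H₂)).fst⟫_ℂ = 0 := inner_zero_right _
  rw [h3] at h
  linear_combination -h

/-- Forward direction: if `T` is self-adjoint, the Schur complement identity holds. -/
lemma schur_adjoint_eq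
    (hAd : Dense (A.domain : Set H₁)) (hCd : Dense (C.domain : Set H₁))
    (hDd : Dense (D.domain : Set H₂))
    (hAsym : A ≤ A.adjoint) (hBC : B ≤ C.adjoint) (hDsym : D ≤ D.adjoint)
    (hBc : B.IsClosable)
    (hdense : Dense ((blockOpL A B C D).domain : Set (WithLp 2 (H₁ × H₂))))
    (hDB : D.domain ≤ B.domain)
    (hT : (blockOpL A B C D).adjoint = blockOpL A B C D)
    (hR : IsResolventAt D lam R) (hR' : IsResolventAt D (starRingEnd ℂ lam) R') :
    (A - pcomp B ((R : H₂ →ₗ[ℂ] H₂).compPMap C)).adjoint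
      = A - pcomp B ((R' : H₂ →ₗ[ℂ] H₂).compPMap C) := by
  have hds := (dense_components A B C D hdense).1
  have hset : (((A - pcomp B ((R : H₂ →ₗ[ℂ] H₂).compPMap C)).domain : Submodule ℂ H₁) : Set H₁)
      = ((A.domain ⊓ C.domain : Submodule ℂ H₁) : Set H₁) := by
    ext x
    simp only [SetLike.mem_coe, mem_schur_iff hDB hR, Submodule.mem_inf]
  have hSd : Dense (((A - pcomp B ((R : H₂ →ₗ[ℂ] H₂).compPMap C)).domain :
      Submodule ℂ H₁) : Set H₁) := hset ▸ hds
  have hle : (A - pcomp B ((R' : H₂ →ₗ[ℂ] H₂).compPMap C))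
      ≤ (A - pcomp B ((R : H₂ →ₗ[ℂ] H₂).compPMap C)).adjoint :=
    (schur_isFormalAdjoint hAd hCd hDd hAsym hBC hDsym hDB hR hR').le_adjoint hSd
  obtain ⟨G, hG⟩ := exists_BR hBc hDB hR
  have hrev : (A - pcomp B ((R : H₂ →ₗ[ℂ] H₂).compPMap C)).adjoint.domain
      ≤ (A - pcomp B ((R' : H₂ →ₗ[ℂ] H₂).compPMap C)).domain := by
    intro u hu
    set v : H₁ := (A - pcomp B ((R : H₂ →ₗ[ℂ] H₂).compPMap C)).adjoint ⟨u, hu⟩ with hv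
    set w : H₂ := -(ContinuousLinearMap.adjoint G u) with hwdef
    -- the pair (u, w) is in the domain of T†
    have hpair : ∀ X : (blockOpL A B C D).domain,
        ⟪(WithLp.equiv 2 (H₁ × H₂)).symm (v, (starRingEnd ℂ lam) • w),
          (X : WithLp 2 (H₁ × H₂))⟫_ℂ
        = ⟪(WithLp.equiv 2 (H₁ × H₂)).symm (u, w), blockOpL A B C D X⟫_ℂ := by
      rintro ⟨x, hX⟩
      rw [WithLp.prod_inner_apply, WithLp.prod_inner_apply]; simp only [WithLp.ofLp_fst, WithLp.ofLp_snd]; rw [blockOpL_apply_fst' ⟨x, hX⟩,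
        blockOpL_apply_snd' ⟨x, hX⟩]
      show ⟪v, x.fst⟫_ℂ + ⟪(starRingEnd ℂ lam) • w, x.snd⟫_ℂ
          = ⟪u, (A ⟨x.fst, hX.1.1⟩ : H₁) + B ⟨x.snd, hX.2.1⟩⟫_ℂ
            + ⟪w, (C ⟨x.fst, hX.1.2⟩ : H₂) + D ⟨x.snd, hX.2.2⟩⟫_ℂ
      have hw : ContinuousLinearMap.adjoint G u = -w := by rw [hwdef, neg_neg]
      have hSmem : x.fst ∈ (A - pcomp B ((R : H₂ →ₗ[ℂ] H₂).compPMap C)).domain :=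
        (mem_schur_iff hDB hR).mpr ⟨hX.1.1, hX.1.2⟩
      have h0 : ⟪v, x.fst⟫_ℂ
          = ⟪u, (A ⟨x.fst, hX.1.1⟩ : H₁)
              - B ⟨R (C ⟨x.fst, hX.1.2⟩), hDB (hR.mem _)⟩⟫_ℂ :=
        LinearPMap.adjoint_isFormalAdjoint hSd ⟨u, hu⟩ ⟨x.fst, hSmem⟩
      have h1 : (B ⟨R (C ⟨x.fst, hX.1.2⟩), hDB (hR.mem _)⟩ : H₁)
          = G (C ⟨x.fst, hX.1.2⟩) := (hG _).symm
      rw [h1, inner_sub_right] at h0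
      have h2 : ⟪u, G (C ⟨x.fst, hX.1.2⟩)⟫_ℂ = -⟪w, (C ⟨x.fst, hX.1.2⟩ : H₂)⟫_ℂ := by
        rw [← ContinuousLinearMap.adjoint_inner_left, hw, inner_neg_left]
      have hBx : (B ⟨x.snd, hX.2.1⟩ : H₁)
          = G (D ⟨x.snd, hX.2.2⟩ - lam • x.snd) := by
        rw [hG]
        congr 1
        exact Subtype.ext (hR.left_inv ⟨x.snd, hX.2.2⟩).symm
      have h3 : ⟪u, G (D ⟨x.snd, hX.2.2⟩ - lam • x.snd)⟫_ℂ
          = -⟪w, (D ⟨x.snd, hX.2.2⟩ : H₂)⟫_ℂ + lam * ⟪w, x.snd⟫_ℂ := by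
        rw [← ContinuousLinearMap.adjoint_inner_left, hw, inner_neg_left, inner_sub_right,
          inner_smul_right]
        ring
      rw [hBx]
      simp only [inner_add_right, inner_smul_left, starRingEnd_self_apply]
      linear_combination h0 - h2 - h3
    have hmemadj : (WithLp.equiv 2 (H₁ × H₂)).symm (u, w) ∈ (blockOpL A B C D).adjoint.domain :=
      LinearPMap.mem_adjoint_domain_of_exists _
        ⟨(WithLp.equiv 2 (H₁ × H₂)).symm (v, (starRingEnd ℂ lam) • w), hpair⟩
    have hmemT : (WithLp.equiv 2 (H₁ × H₂)).symm (u, w) ∈ (blockOpL A B C D).domain :=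
      hT ▸ hmemadj
    exact (mem_schur_iff hDB hR').mpr ⟨hmemT.1.1, hmemT.1.2⟩
  exact (LinearPMap.eq_of_le_of_domain_eq hle (le_antisymm hle.1 hrev)).symm

end Aux4
end BlockOp
namespace BlockOp
section Aux5
variable {H₁ H₂ : Type*}
    [NormedAddCommGroup H₁] [InnerProductSpace ℂ H₁] [CompleteSpace H₁]
    [NormedAddCommGroup H₂] [InnerProductSpace ℂ H₂] [CompleteSpace H₂]
    {A : H₁ →ₗ.[ℂ] H₁} {B : H₂ →ₗ.[ℂ] H₁} {C : H₁ →ₗ.[ℂ] H₂} {D : H₂ →ₗ.[ℂ] H₂}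
    {lam : ℂ} {R R' : H₂ →L[ℂ] H₂}

/-- Backward direction: the Schur identity implies that `T` is self-adjoint. -/
lemma selfadjoint_of_schur
    (hAd : Dense (A.domain : Set H₁)) (hCd : Dense (C.domain : Set H₁))
    (hDd : Dense (D.domain : Set H₂))
    (hAsym : A ≤ A.adjoint) (hBC : B ≤ C.adjoint) (hDsym : D ≤ D.adjoint)
    (hBc : B.IsClosable)
    (hdense : Dense ((blockOpL A B C D).domain : Set (WithLp 2 (H₁ × H₂))))
    (hD : D.adjoint = D) (hDB : D.domain ≤ B.domain)
    (hR : IsResolventAt D lam R) (hR' : IsResolventAt D (starRingEnd ℂ lam) R')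
    (hSS' : (A - pcomp B ((R : H₂ →ₗ[ℂ] H₂).compPMap C)).adjoint
      = A - pcomp B ((R' : H₂ →ₗ[ℂ] H₂).compPMap C)) :
    (blockOpL A B C D).adjoint = blockOpL A B C D := by
  have hle : blockOpL A B C D ≤ (blockOpL A B C D).adjoint :=
    T_le_adjoint hAd hCd hDd hAsym hBC hDsym hdense
  obtain ⟨G, hG⟩ := exists_BR hBc hDB hR
  have hstep : ∀ {Z : WithLp 2 (H₁ × H₂)}, Z ∈ (blockOpL A B C D).adjoint.domain →
      (ContinuousLinearMap.adjoint G) Z.fst + Z.snd ∈ D.domain := by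
    intro Z hZ
    have hmem : (ContinuousLinearMap.adjoint G) Z.fst + Z.snd ∈ D.adjoint.domain :=
      LinearPMap.mem_adjoint_domain_of_exists _
        ⟨(((blockOpL A B C D).adjoint ⟨Z, hZ⟩ : WithLp 2 (H₁ × H₂))).snd
            + (starRingEnd ℂ lam) • (ContinuousLinearMap.adjoint G) Z.fst,
          fun x₂ => (step1 hdense hDB hR hG hZ x₂).symm⟩
    rw [hD] at hmem
    exact hmem
  have hrev : (blockOpL A B C D).adjoint.domain ≤ (blockOpL A B C D).domain := by
    intro X hX
    have hm := hstep hX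
    set m : H₂ := (ContinuousLinearMap.adjoint G) X.fst + X.snd with hmdef
    have hY0 : (WithLp.equiv 2 (H₁ × H₂)).symm (0, m) ∈ (blockOpL A B C D).domain :=
      mem_pair0 hDB hm
    have hX' : X - (WithLp.equiv 2 (H₁ × H₂)).symm (0, m) ∈ (blockOpL A B C D).adjoint.domain :=
      sub_mem hX (hle.1 hY0)
    have hfst : (X - (WithLp.equiv 2 (H₁ × H₂)).symm (0, m)).fst = X.fst := by
      show X.fst - 0 = X.fst
      rw [sub_zero]
    have hsnd : (X - (WithLp.equiv 2 (H₁ × H₂)).symm (0, m)).snd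
        = -((ContinuousLinearMap.adjoint G) X.fst) := by
      show X.snd - m = -((ContinuousLinearMap.adjoint G) X.fst)
      rw [hmdef]
      abel
    have hq'val : (((blockOpL A B C D).adjoint
          ⟨X - (WithLp.equiv 2 (H₁ × H₂)).symm (0, m), hX'⟩ : WithLp 2 (H₁ × H₂))).snd
        = -((starRingEnd ℂ lam) • (ContinuousLinearMap.adjoint G) X.fst) := by
      have h0 : ∀ x₂ : D.domain,
          ⟪(((blockOpL A B C D).adjoint
              ⟨X - (WithLp.equiv 2 (H₁ × H₂)).symm (0, m), hX'⟩ : WithLp 2 (H₁ × H₂))).snd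
            + (starRingEnd ℂ lam) • (ContinuousLinearMap.adjoint G) X.fst, (x₂ : H₂)⟫_ℂ
            = 0 := by
        intro x₂
        have h1 := step1 hdense hDB hR hG hX' x₂
        rw [hfst, hsnd, add_neg_cancel, inner_zero_left] at h1
        exact h1.symm
      have hz := hDd.eq_zero_of_inner_left ℂ (fun v hv => h0 ⟨v, hv⟩)
      exact eq_neg_of_add_eq_zero_left hz
    have hSadj : X.fst ∈ (A - pcomp B ((R : H₂ →ₗ[ℂ] H₂).compPMap C)).adjoint.domain := by
      apply LinearPMap.mem_adjoint_domain_of_exists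
      refine ⟨(((blockOpL A B C D).adjoint
          ⟨X - (WithLp.equiv 2 (H₁ × H₂)).symm (0, m), hX'⟩ : WithLp 2 (H₁ × H₂))).fst, ?_⟩
      rintro ⟨x₁, hx⟩
      have hA : x₁ ∈ A.domain := hx.1
      obtain ⟨hC0, hB0⟩ := hx.2
      have hC : x₁ ∈ C.domain := hC0
      have hp := LinearPMap.adjoint_isFormalAdjoint hdense
        ⟨X - (WithLp.equiv 2 (H₁ × H₂)).symm (0, m), hX'⟩
        ⟨(WithLp.toLp 2 (x₁, -(R (C ⟨x₁, hC⟩))) : WithLp 2 (H₁ × H₂)), pair_mem hDB hR hA hC⟩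
      rw [WithLp.prod_inner_apply, WithLp.prod_inner_apply] at hp; simp only [WithLp.ofLp_fst, WithLp.ofLp_snd] at hp; rw [T_pair_fst hDB hR hA hC,
        T_pair_snd hDB hR hA hC] at hp
      have hp2 : ⟪(((blockOpL A B C D).adjoint
              ⟨X - (WithLp.equiv 2 (H₁ × H₂)).symm (0, m), hX'⟩ : WithLp 2 (H₁ × H₂))).fst,
            x₁⟫_ℂ
          + ⟪(((blockOpL A B C D).adjoint
              ⟨X - (WithLp.equiv 2 (H₁ × H₂)).symm (0, m), hX'⟩ : WithLp 2 (H₁ × H₂))).snd,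
            -(R (C ⟨x₁, hC⟩))⟫_ℂ
          = ⟪(X - (WithLp.equiv 2 (H₁ × H₂)).symm (0, m)).fst,
              (A ⟨x₁, hA⟩ : H₁) - B ⟨R (C ⟨x₁, hC⟩), hDB (hR.mem _)⟩⟫_ℂ
            + ⟪(X - (WithLp.equiv 2 (H₁ × H₂)).symm (0, m)).snd,
              -(lam • R (C ⟨x₁, hC⟩))⟫_ℂ := hp
      rw [hfst, hsnd, hq'val] at hp2
      show ⟪(((blockOpL A B C D).adjoint
            ⟨X - (WithLp.equiv 2 (H₁ × H₂)).symm (0, m), hX'⟩ : WithLp 2 (H₁ × H₂))).fst,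
          x₁⟫_ℂ
        = ⟪X.fst, (A ⟨x₁, hA⟩ : H₁) - B ⟨R (C ⟨x₁, hC⟩), hDB (hR.mem _)⟩⟫_ℂ
      simp only [inner_neg_neg, inner_neg_left, inner_neg_right, inner_smul_left, inner_smul_right,
        starRingEnd_self_apply] at hp2
      linear_combination hp2
    have huS' : X.fst ∈ (A - pcomp B ((R' : H₂ →ₗ[ℂ] H₂).compPMap C)).domain := hSS' ▸ hSadj
    have huA : X.fst ∈ A.domain := huS'.1
    have huC : X.fst ∈ C.domain := by
      obtain ⟨huC0, -⟩ := huS'.2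
      exact huC0
    have hGu : (ContinuousLinearMap.adjoint G) X.fst = R' (C ⟨X.fst, huC⟩) :=
      Gadj_eq hCd hBC hDd hDsym hDB hR hR' hG huC
    have hwmem : X.snd ∈ D.domain := by
      have hx2 : X.snd = m - (ContinuousLinearMap.adjoint G) X.fst := by
        rw [hmdef]
        abel
      rw [hx2, hGu]
      exact sub_mem hm (hR'.mem _)
    exact ⟨⟨huA, huC⟩, hDB hwmem, hwmem⟩
  exact (LinearPMap.eq_of_le_of_domain_eq hle (le_antisymm hle.1 hrev)).symm

end Aux5
end BlockOp
namespace BlockOp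
section Aux6
variable {H₂ : Type*} [NormedAddCommGroup H₂] [InnerProductSpace ℂ H₂] [CompleteSpace H₂]

lemma exists_resolvent {D : H₂ →ₗ.[ℂ] H₂} (hDd : Dense (D.domain : Set H₂))
    (hD : D.adjoint = D) {lam : ℂ} (hlam : lam = Complex.I ∨ lam = -Complex.I) :
    ∃ R : H₂ →L[ℂ] H₂, IsResolventAt D lam R := by
  have hDsym : D ≤ D.adjoint := le_of_eq hD.symm
  have pairD := pair_of_le hDd hDsym
  set L : D.domain →ₗ[ℂ] H₂ :=
    { toFun := fun x => D x - lam • (x : H₂)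
      map_add' := fun x y => by
        show D (x + y) - lam • ((x + y : D.domain) : H₂)
            = (D x - lam • (x : H₂)) + (D y - lam • (y : H₂))
        rw [LinearPMap.map_add, Submodule.coe_add, smul_add]
        abel
      map_smul' := fun c x => by
        show D (c • x) - lam • ((c • x : D.domain) : H₂)
            = c • (D x - lam • (x : H₂))
        rw [LinearPMap.map_smul, Submodule.coe_smul, smul_sub, smul_comm] }
    with hLdef
  have hLapp : ∀ x : D.domain, L x = D x - lam • (x : H₂) := fun x => rfl
  -- the inner product ⟪D x, x⟫ is real
  have hreal : ∀ x : D.domain, (starRingEnd ℂ) ⟪(D x : H₂), (x : H₂)⟫_ℂ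
      = ⟪(D x : H₂), (x : H₂)⟫_ℂ := by
    intro x
    rw [inner_conj_symm]
    exact (pairD x x).symm
  -- norm identity
  have hnorm : ∀ x : D.domain, ‖L x‖ ^ 2 = ‖(D x : H₂)‖ ^ 2 + ‖(x : H₂)‖ ^ 2 := by
    intro x
    rw [hLapp x, @norm_sub_sq ℂ]
    have him : (⟪(D x : H₂), (x : H₂)⟫_ℂ).im = 0 :=
      Complex.conj_eq_iff_im.mp (hreal x)
    have hre : RCLike.re ⟪(D x : H₂), lam • (x : H₂)⟫_ℂ = 0 := by
      rw [inner_smul_right, RCLike.re_to_complex]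
      rcases hlam with h | h <;> subst h <;>
        simp [Complex.mul_re, him]
    have hnl : ‖lam • (x : H₂)‖ = ‖(x : H₂)‖ := by
      rcases hlam with h | h <;> subst h <;> simp [norm_smul]
    rw [hre, hnl]
    ring
  -- lower bounds
  have hb : ∀ x : D.domain, ‖(x : H₂)‖ ≤ ‖L x‖ := by
    intro x
    nlinarith [hnorm x, norm_nonneg (L x), norm_nonneg ((x : H₂)), sq_nonneg ‖(D x : H₂)‖,
      norm_nonneg ((D x : H₂))]
  have hbD : ∀ x : D.domain, ‖(D x : H₂)‖ ≤ ‖L x‖ := by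
    intro x
    nlinarith [hnorm x, norm_nonneg (L x), norm_nonneg ((x : H₂)), sq_nonneg ‖(x : H₂)‖,
      norm_nonneg ((D x : H₂))]
  have hinj : Function.Injective L := by
    intro x y hxy
    have h0 : L (x - y) = 0 := by rw [_root_.map_sub, hxy, sub_self]
    have h1 := hb (x - y)
    rw [h0, norm_zero] at h1
    have h2 : ‖((x - y : D.domain) : H₂)‖ = 0 := le_antisymm h1 (norm_nonneg _)
    have h3 : ((x - y : D.domain) : H₂) = 0 := norm_eq_zero.mp h2
    rw [Submodule.coe_sub, sub_eq_zero] at h3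
    exact Subtype.ext h3
  -- range is closed
  have hKclosed : IsClosed ((LinearMap.range L : Submodule ℂ H₂) : Set H₂) := by
    apply IsSeqClosed.isClosed
    intro u y hu huy
    choose x hx using fun n => hu n
    have hcu : CauchySeq u := huy.cauchySeq
    have key : ∀ (f : D.domain → H₂), (∀ z, ‖f z‖ ≤ ‖L z‖) → (∀ z w, f (z - w) = f z - f w) →
        CauchySeq fun n => f (x n) := by
      intro f hf hfsub
      rw [Metric.cauchySeq_iff] at hcu ⊢
      intro ε hε
      obtain ⟨N, hN⟩ := hcu ε hε
      refine ⟨N, fun p hp q hq => ?_⟩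
      have h1 : dist (f (x p)) (f (x q)) ≤ dist (u p) (u q) := by
        rw [dist_eq_norm, dist_eq_norm, ← hx p, ← hx q, ← _root_.map_sub L (x p) (x q),
          ← hfsub]
        exact hf _
      exact lt_of_le_of_lt h1 (hN p hp q hq)
    have hcb : CauchySeq fun n => ((x n : H₂)) := by
      refine key (fun z => (z : H₂)) hb ?_
      intro z w; rfl
    have hcD : CauchySeq fun n => (D (x n) : H₂) := by
      refine key (fun z => (D z : H₂)) hbD ?_
      intro z w; exact LinearPMap.map_sub D z w
    obtain ⟨xl, hxl⟩ := cauchySeq_tendsto_of_complete hcb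
    obtain ⟨z, hz⟩ := cauchySeq_tendsto_of_complete hcD
    have hlim : ∀ v : D.domain, ⟪z, (v : H₂)⟫_ℂ = ⟪xl, (D v : H₂)⟫_ℂ := by
      intro v
      have l1 : Filter.Tendsto (fun n => ⟪(D (x n) : H₂), (v : H₂)⟫_ℂ)
          Filter.atTop (nhds ⟪z, (v : H₂)⟫_ℂ) := hz.inner tendsto_const_nhds
      have l2 : Filter.Tendsto (fun n => ⟪((x n : H₂)), (D v : H₂)⟫_ℂ)
          Filter.atTop (nhds ⟪xl, (D v : H₂)⟫_ℂ) := hxl.inner tendsto_const_nhds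
      have l3 : (fun n => ⟪(D (x n) : H₂), (v : H₂)⟫_ℂ)
          = fun n => ⟪((x n : H₂)), (D v : H₂)⟫_ℂ := funext fun n => pairD (x n) v
      rw [l3] at l1
      exact tendsto_nhds_unique l1 l2
    have hxad : xl ∈ D.adjoint.domain :=
      LinearPMap.mem_adjoint_domain_of_exists _ ⟨z, hlim⟩
    have hxdom : xl ∈ D.domain := hD ▸ hxad
    have hDval : D ⟨xl, hxdom⟩ = z := by
      have h1 : D.adjoint ⟨xl, hxad⟩ = z := LinearPMap.adjoint_apply_eq hDd ⟨xl, hxad⟩ hlim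
      have h2 : D.adjoint ⟨xl, hxad⟩ = D ⟨xl, hxdom⟩ := hD.le.2 rfl
      rw [← h2, h1]
    have hLn : Filter.Tendsto (fun n => L (x n)) Filter.atTop (nhds (z - lam • xl)) := by
      have heq : (fun n => L (x n)) = fun n => (D (x n) : H₂) - lam • ((x n : H₂)) :=
        funext fun n => hLapp (x n)
      rw [heq]
      exact hz.sub (hxl.const_smul lam)
    have hLu : Filter.Tendsto (fun n => L (x n)) Filter.atTop (nhds y) := by
      have heq : (fun n => L (x n)) = u := funext hx
      rw [heq]; exact huy
    have hyz : y = z - lam • xl := tendsto_nhds_unique hLu hLn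
    refine ⟨⟨xl, hxdom⟩, ?_⟩
    rw [hLapp, hDval, hyz]
  -- orthogonal complement of the range is trivial
  have horth : (LinearMap.range L : Submodule ℂ H₂)ᗮ = ⊥ := by
    rw [Submodule.eq_bot_iff]
    intro v hv
    have hv' : ∀ x : D.domain, ⟪L x, v⟫_ℂ = 0 := fun x =>
      (Submodule.mem_orthogonal _ v).mp hv (L x) (LinearMap.mem_range_self L x)
    have hvad : v ∈ D.adjoint.domain := by
      apply LinearPMap.mem_adjoint_domain_of_exists
      refine ⟨(starRingEnd ℂ lam) • v, fun x => ?_⟩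
      have h1 := hv' x
      rw [hLapp, inner_sub_left, inner_smul_left, sub_eq_zero] at h1
      rw [inner_smul_left, starRingEnd_self_apply, ← inner_conj_symm ((v : H₂)) ((D x : H₂)),
        h1, map_mul, starRingEnd_self_apply, inner_conj_symm]
    have hvdom : v ∈ D.domain := hD ▸ hvad
    have hDv : D ⟨v, hvdom⟩ = (starRingEnd ℂ lam) • v := by
      have h1 : D.adjoint ⟨v, hvad⟩ = (starRingEnd ℂ lam) • v := by
        apply LinearPMap.adjoint_apply_eq hDd
        intro x
        have h1 := hv' x
        rw [hLapp, inner_sub_left, inner_smul_left, sub_eq_zero] at h1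
        rw [inner_smul_left, starRingEnd_self_apply, ← inner_conj_symm ((v : H₂)) ((D x : H₂)),
          h1, map_mul, starRingEnd_self_apply, inner_conj_symm]
      have h2 : D.adjoint ⟨v, hvad⟩ = D ⟨v, hvdom⟩ := hD.le.2 rfl
      rw [← h2, h1]
    have hp := pairD ⟨v, hvdom⟩ ⟨v, hvdom⟩
    rw [hDv, inner_smul_left, inner_smul_right, starRingEnd_self_apply] at hp
    have hzero : (lam - starRingEnd ℂ lam) * ⟪(v : H₂), (v : H₂)⟫_ℂ = 0 := by
      linear_combination hp
    have hne : lam - starRingEnd ℂ lam ≠ 0 := by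
      rcases hlam with h | h <;> subst h <;>
        simp [Complex.ext_iff, Complex.conj_I] <;> norm_num
    have hvv : ⟪(v : H₂), (v : H₂)⟫_ℂ = 0 := (mul_eq_zero.mp hzero).resolve_left hne
    exact inner_self_eq_zero.mp hvv
  have hKtop : LinearMap.range L = ⊤ := by
    rw [← hKclosed.submodule_topologicalClosure_eq]
    exact Submodule.topologicalClosure_eq_top_iff.mpr horth
  have hsurj : Function.Surjective L := LinearMap.range_eq_top.mp hKtop
  set e := LinearEquiv.ofBijective L ⟨hinj, hsurj⟩ with hedef
  set R0 : H₂ →ₗ[ℂ] H₂ := (D.domain.subtype).comp (e.symm : H₂ →ₗ[ℂ] D.domain) with hR0def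
  have hbound : ∀ y, ‖R0 y‖ ≤ 1 * ‖y‖ := by
    intro y
    rw [one_mul]
    have h1 : L (e.symm y) = y := e.apply_symm_apply y
    calc ‖R0 y‖ = ‖((e.symm y : D.domain) : H₂)‖ := rfl
      _ ≤ ‖L (e.symm y)‖ := hb _
      _ = ‖y‖ := by rw [h1]
  refine ⟨R0.mkContinuous 1 hbound, fun y => (e.symm y).2, fun y => ?_, fun x => ?_⟩
  · exact e.apply_symm_apply y
  · exact congrArg Subtype.val (e.symm_apply_apply x)
end Aux6
end BlockOp

namespace BlockOp

theorem statement11 {H₁ H₂ : Type*}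
    [NormedAddCommGroup H₁] [InnerProductSpace ℂ H₁] [CompleteSpace H₁]
    [NormedAddCommGroup H₂] [InnerProductSpace ℂ H₂] [CompleteSpace H₂]
    (A : H₁ →ₗ.[ℂ] H₁) (B : H₂ →ₗ.[ℂ] H₁) (C : H₁ →ₗ.[ℂ] H₂) (D : H₂ →ₗ.[ℂ] H₂)
    (hAd : Dense (A.domain : Set H₁)) (hBd : Dense (B.domain : Set H₂))
    (hCd : Dense (C.domain : Set H₁)) (hDd : Dense (D.domain : Set H₂))
    (hAc : A.IsClosable) (hBc : B.IsClosable) (hCc : C.IsClosable) (hDc : D.IsClosable)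
    (hAsym : A ≤ A.adjoint) (hBC : B ≤ C.adjoint) (hDsym : D ≤ D.adjoint)
    (hdense : Dense ((blockOpL A B C D).domain : Set (WithLp 2 (H₁ × H₂))))
    (hD : IsSelfAdjoint D) (hDB : D.domain ≤ B.domain) :
    (IsSelfAdjoint (blockOpL A B C D) ↔
      ∃ (lam : ℂ) (R R' : H₂ →L[ℂ] H₂), IsResolventAt D lam R ∧
        IsResolventAt D (starRingEnd ℂ lam) R' ∧
        (A - pcomp B ((R : H₂ →ₗ[ℂ] H₂).compPMap C)).adjoint =
          A - pcomp B ((R' : H₂ →ₗ[ℂ] H₂).compPMap C)) ∧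
    (IsSelfAdjoint (blockOpL A B C D) →
      ∀ (lam : ℂ) (R R' : H₂ →L[ℂ] H₂), IsResolventAt D lam R →
        IsResolventAt D (starRingEnd ℂ lam) R' →
        (A - pcomp B ((R : H₂ →ₗ[ℂ] H₂).compPMap C)).adjoint =
          A - pcomp B ((R' : H₂ →ₗ[ℂ] H₂).compPMap C)) := by
  have hDeq : D.adjoint = D := LinearPMap.isSelfAdjoint_def.mp hD
  constructor
  · constructor
    · intro hT
      have hTeq : (blockOpL A B C D).adjoint = blockOpL A B C D :=
        LinearPMap.isSelfAdjoint_def.mp hT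
      obtain ⟨R, hR⟩ := exists_resolvent hDd hDeq (Or.inl rfl)
      obtain ⟨R', hR'0⟩ := exists_resolvent hDd hDeq (Or.inr rfl)
      have hR' : IsResolventAt D (starRingEnd ℂ Complex.I) R' := by
        rw [Complex.conj_I]; exact hR'0
      exact ⟨Complex.I, R, R', hR, hR',
        schur_adjoint_eq hAd hCd hDd hAsym hBC hDsym hBc hdense hDB hTeq hR hR'⟩
    · rintro ⟨lam, R, R', hR, hR', hSS'⟩
      exact LinearPMap.isSelfAdjoint_def.mpr
        (selfadjoint_of_schur hAd hCd hDd hAsym hBC hDsym hBc hdense hDeq hDB hR hR' hSS')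
  · intro hT lam R R' hR hR'
    exact schur_adjoint_eq hAd hCd hDd hAsym hBC hDsym hBc hdense hDB
      (LinearPMap.isSelfAdjoint_def.mp hT) hR hR'

end BlockOp
end
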